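/- arXiv:1005.3871 — 6 statements merged into one kernel-verified Lean document; each statement's English description precedes it below -/
import Mathlib

section
/- For every integer b ≥ 2 there exists a constant K > 0 (depending only on b) such that for all real t ≥ 1, the sum ∑ 1/(ℓ·ord_ℓ(b)), taken over all primes ℓ with ℓ ≥ t and ℓ ∤ b, is at most K·t^{−1/2}. -/
open Finset
lemma my_sum_inv_le (M : Finset ℕ) (hM : ∀ m ∈ M, 1 ≤ m) :
    ∑ m ∈ M, (1:ℝ)/m ≤ 2 + Real.log M.card := by
  classical
  set n := M.card with hn
  rcases Nat.eq_zero_or_pos n with h0 | hpos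
  · have : M = ∅ := Finset.card_eq_zero.mp h0
    simp [this, h0]
  · have hsplit := Finset.sum_filter_add_sum_filter_not M (fun m => m ≤ n) (fun m => (1:ℝ)/m)
    have h1 : ∑ m ∈ M.filter (fun m => m ≤ n), (1:ℝ)/m ≤ 1 + Real.log n := by
      have hsub : M.filter (fun m => m ≤ n) ⊆ Finset.Icc 1 n := by
        intro m hm
        rw [Finset.mem_filter] at hm
        exact Finset.mem_Icc.mpr ⟨hM m hm.1, hm.2⟩
      calc ∑ m ∈ M.filter (fun m => m ≤ n), (1:ℝ)/m
          ≤ ∑ m ∈ Finset.Icc 1 n, (1:ℝ)/m :=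
            Finset.sum_le_sum_of_subset_of_nonneg hsub (by intros; positivity)
        _ = (harmonic n : ℝ) := by
            rw [harmonic_eq_sum_Icc]; push_cast; simp [one_div]
        _ ≤ 1 + Real.log n := harmonic_le_one_add_log n
    have h2 : ∑ m ∈ M.filter (fun m => ¬ m ≤ n), (1:ℝ)/m ≤ 1 := by
      have hterm : ∀ m ∈ M.filter (fun m => ¬ m ≤ n), (1:ℝ)/m ≤ 1/n := by
        intro m hm
        rw [Finset.mem_filter] at hm
        have : n ≤ m := le_of_lt (lt_of_not_ge hm.2)
        apply one_div_le_one_div_of_le (by exact_mod_cast hpos)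
        exact_mod_cast this
      calc ∑ m ∈ M.filter (fun m => ¬ m ≤ n), (1:ℝ)/m
          ≤ (M.filter (fun m => ¬ m ≤ n)).card • ((1:ℝ)/n) :=
            Finset.sum_le_card_nsmul _ _ _ hterm
        _ ≤ n • ((1:ℝ)/n) := by
            apply smul_le_smul_of_nonneg_right
            · exact Finset.card_filter_le _ _
            · positivity
        _ = 1 := by
            rw [nsmul_eq_mul]
            field_simp
    linarith [hsplit.ge, hsplit.le, h1, h2, hsplit]

lemma my_step_ineq {a x : ℝ} (ha : 1 ≤ a) (hx : 1 ≤ x) :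
    (a + Real.log x)/x^2 ≤ 2*(a+1+Real.log x)/x - 2*(a+1+Real.log (x+1))/(x+1) := by
  have hx0 : (0:ℝ) < x := by linarith
  have hx1 : (0:ℝ) < x + 1 := by linarith
  have hL : 0 ≤ Real.log x := Real.log_nonneg hx
  have hL' : Real.log (x+1) ≤ Real.log x + 1/x := by
    have h := Real.log_le_sub_one_of_pos (show (0:ℝ) < (x+1)/x by positivity)
    rw [Real.log_div hx1.ne' hx0.ne'] at h
    have h2 : (x+1)/x - 1 = 1/x := by field_simp; ring
    linarith [h2 ▸ h]
  set L := Real.log x with hLdef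
  have hdiff : 2*(a+1+L)/x - 2*(a+1+(L+1/x))/(x+1) - (a+L)/x^2
      = (a+L)*(x^2-x)/(x^3*(x+1)) := by
    field_simp
    ring
  have hpos : 0 ≤ (a+L)*(x^2-x)/(x^3*(x+1)) := by
    apply div_nonneg
    · apply mul_nonneg (by linarith) (by nlinarith)
    · positivity
  have hmono : 2*(a+1+Real.log (x+1))/(x+1) ≤ 2*(a+1+(L+1/x))/(x+1) := by
    gcongr
  linarith

lemma my_telescope {a : ℝ} (ha : 1 ≤ a) {m : ℕ} (hm : 1 ≤ m) (N : ℕ) :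
    ∑ k ∈ Finset.Icc m (m+N), (a + Real.log k)/(k:ℝ)^2 ≤
      2*(a+1+Real.log m)/(m:ℝ) - 2*(a+1+Real.log ((m:ℝ)+N+1))/((m:ℝ)+N+1) := by
  have hm1 : (1:ℝ) ≤ (m:ℝ) := by exact_mod_cast hm
  induction N with
  | zero =>
      simp only [Nat.add_zero, Finset.Icc_self, Finset.sum_singleton, Nat.cast_zero, add_zero]
      exact my_step_ineq ha hm1
  | succ N ih =>
      rw [show m + (N+1) = (m+N)+1 by omega, Finset.sum_Icc_succ_top (by omega)]
      have hstep := my_step_ineq (a := a) (x := (m:ℝ)+N+1) ha (by push_cast; linarith)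
      have hc : ((m+N+1 : ℕ):ℝ) = (m:ℝ)+N+1 := by push_cast; ring
      rw [show m + N + 1 = m + N + 1 from rfl]
      push_cast
      push_cast at ih hstep
      rw [show ((m:ℝ) + (↑N + 1) + 1) = (m:ℝ) + ↑N + 1 + 1 by ring]
      linarith

lemma my_sum_tail {a : ℝ} (ha : 1 ≤ a) {m : ℕ} (hm : 1 ≤ m) (s : Finset ℕ)
    (hs : ∀ k ∈ s, m ≤ k) :
    ∑ k ∈ s, (a + Real.log k)/(k:ℝ)^2 ≤ 2*(a+1+Real.log m)/(m:ℝ) := by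
  have hm0 : (0:ℝ) < (m:ℝ) := by exact_mod_cast hm
  have hrhs : 0 ≤ 2*(a+1+Real.log m)/(m:ℝ) := by
    apply div_nonneg ?_ hm0.le
    have : 0 ≤ Real.log m := Real.log_nonneg (by exact_mod_cast hm)
    linarith
  rcases s.eq_empty_or_nonempty with rfl | hne
  · simpa using hrhs
  · have hmax : m ≤ s.max' hne := hs _ (s.max'_mem hne)
    have hsub : s ⊆ Finset.Icc m (m + (s.max' hne - m)) := by
      intro k hk
      rw [Finset.mem_Icc]
      refine ⟨hs k hk, ?_⟩
      have := Finset.le_max' s k hk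
      omega
    calc ∑ k ∈ s, (a + Real.log k)/(k:ℝ)^2
        ≤ ∑ k ∈ Finset.Icc m (m + (s.max' hne - m)), (a + Real.log k)/(k:ℝ)^2 := by
          apply Finset.sum_le_sum_of_subset_of_nonneg hsub
          intro k hk _
          rw [Finset.mem_Icc] at hk
          have hk1 : (1:ℝ) ≤ (k:ℝ) := by exact_mod_cast le_trans hm hk.1
          have : 0 ≤ Real.log k := Real.log_nonneg hk1
          positivity
      _ ≤ 2*(a+1+Real.log m)/(m:ℝ)
          - 2*(a+1+Real.log ((m:ℝ)+((s.max' hne - m : ℕ):ℝ)+1))/((m:ℝ)+((s.max' hne - m : ℕ):ℝ)+1) :=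
          my_telescope ha hm _
      _ ≤ 2*(a+1+Real.log m)/(m:ℝ) := by
          have hx1 : (1:ℝ) ≤ (m:ℝ)+(s.max' hne - m : ℕ)+1 := by
            have : (0:ℝ) ≤ ((s.max' hne - m : ℕ):ℝ) := Nat.cast_nonneg _
            linarith
          have : 0 ≤ Real.log ((m:ℝ)+(s.max' hne - m : ℕ)+1) := Real.log_nonneg hx1
          have hp : 0 ≤ 2*(a+1+Real.log ((m:ℝ)+(s.max' hne - m : ℕ)+1))/((m:ℝ)+(s.max' hne - m : ℕ)+1) := by
            apply div_nonneg ?_ (by linarith)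
            linarith
          linarith

lemma my_ord_pos {b ℓ : ℕ} (hp : ℓ.Prime) (hd : ¬ ℓ ∣ b) :
    0 < orderOf ((b : ZMod ℓ)) := by
  haveI : Fact ℓ.Prime := ⟨hp⟩
  have hb0 : (b : ZMod ℓ) ≠ 0 := by
    simpa [ZMod.natCast_eq_zero_iff] using hd
  have hpow : (b : ZMod ℓ) ^ (ℓ - 1) = 1 := ZMod.pow_card_sub_one_eq_one hb0
  have h1 : 0 < ℓ - 1 := by have := hp.two_le; omega
  exact orderOf_pos_iff.mpr (isOfFinOrder_iff_pow_eq_one.mpr ⟨ℓ-1, h1, hpow⟩)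

lemma my_ord_dvd {b ℓ : ℕ} (hp : ℓ.Prime) (hd : ¬ ℓ ∣ b) :
    orderOf ((b : ZMod ℓ)) ∣ ℓ - 1 := by
  haveI : Fact ℓ.Prime := ⟨hp⟩
  have hb0 : (b : ZMod ℓ) ≠ 0 := by
    simpa [ZMod.natCast_eq_zero_iff] using hd
  exact ZMod.orderOf_dvd_card_sub_one hb0

lemma my_prime_dvd {b ℓ : ℕ} (hb : 2 ≤ b) (hp : ℓ.Prime) :
    ℓ ∣ b ^ (orderOf ((b : ZMod ℓ))) - 1 := by
  have h := pow_orderOf_eq_one (b : ZMod ℓ)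
  have hcast : ((b ^ orderOf ((b : ZMod ℓ)) : ℕ) : ZMod ℓ) = ((1:ℕ) : ZMod ℓ) := by
    push_cast
    simpa using h
  have hmod : (1 : ℕ) ≡ b ^ orderOf ((b : ZMod ℓ)) [MOD ℓ] :=
    ((ZMod.natCast_eq_natCast_iff _ _ _).mp hcast).symm
  have h1 : 1 ≤ b ^ orderOf ((b : ZMod ℓ)) := Nat.one_le_pow _ _ (by omega)
  exact (Nat.modEq_iff_dvd' h1).mp hmod

lemma my_fiber_prod_le {b k : ℕ} (hb : 2 ≤ b) (hk : 1 ≤ k) (G : Finset ℕ)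
    (hG : ∀ ℓ ∈ G, ℓ.Prime ∧ orderOf ((b : ZMod ℓ)) = k) :
    ∏ ℓ ∈ G, ℓ ≤ b ^ k := by
  have hdvd : (∏ ℓ ∈ G, ℓ) ∣ b ^ k - 1 := by
    apply Finset.prod_primes_dvd
    · exact fun p hp => (hG p hp).1.prime
    · intro p hp
      have h := my_prime_dvd hb (hG p hp).1
      rwa [(hG p hp).2] at h
  have h2 : 2 ≤ b ^ k := le_trans hb (Nat.le_self_pow (by omega) b)
  have := Nat.le_of_dvd (by omega) hdvd
  omega

lemma my_card_log_le {b k : ℕ} (hb : 2 ≤ b) (hk : 1 ≤ k) (G : Finset ℕ) {r : ℝ} (hr : 1 ≤ r)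
    (hG : ∀ ℓ ∈ G, ℓ.Prime ∧ orderOf ((b : ZMod ℓ)) = k)
    (hge : ∀ ℓ ∈ G, r ≤ (ℓ:ℝ)) :
    (G.card : ℝ) * Real.log r ≤ (k:ℝ) * Real.log b := by
  have h1 : r ^ G.card ≤ ((b:ℝ)) ^ k := by
    calc r ^ G.card = ∏ _ℓ ∈ G, r := (Finset.prod_const r).symm
      _ ≤ ∏ ℓ ∈ G, (ℓ:ℝ) := Finset.prod_le_prod (fun _ _ => by linarith) hge
      _ = ((∏ ℓ ∈ G, ℓ : ℕ) : ℝ) := by push_cast; ring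
      _ ≤ (((b^k : ℕ)) : ℝ) := by exact_mod_cast my_fiber_prod_le hb hk G hG
      _ = (b:ℝ)^k := by push_cast; ring
  have h2 := Real.log_le_log (by positivity) h1
  rwa [Real.log_pow, Real.log_pow] at h2

lemma my_fiber_small {b k : ℕ} (hb : 2 ≤ b) (hk : 1 ≤ k) (G : Finset ℕ) {t : ℝ}
    (ht : Real.exp 1 ≤ t)
    (hG : ∀ ℓ ∈ G, ℓ.Prime ∧ orderOf ((b : ZMod ℓ)) = k)
    (hge : ∀ ℓ ∈ G, t ≤ (ℓ:ℝ)) :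
    ∑ ℓ ∈ G, (1:ℝ)/((ℓ:ℝ)*(k:ℝ)) ≤ Real.log b / (t * Real.log t) := by
  have ht1 : (1:ℝ) ≤ t := le_trans (by linarith [Real.add_one_le_exp (1:ℝ)]) ht
  have ht0 : (0:ℝ) < t := by linarith
  have hlt : 1 ≤ Real.log t := by
    rw [show (1:ℝ) = Real.log (Real.exp 1) by rw [Real.log_exp]]
    exact Real.log_le_log (Real.exp_pos 1) ht
  have hk0 : (0:ℝ) < (k:ℝ) := by exact_mod_cast hk
  have hcount : (G.card : ℝ) * Real.log t ≤ (k:ℝ) * Real.log b :=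
    my_card_log_le hb hk G ht1 hG hge
  have hterm : ∀ ℓ ∈ G, (1:ℝ)/((ℓ:ℝ)*(k:ℝ)) ≤ 1/(t*(k:ℝ)) := by
    intro ℓ hℓ
    have := hge ℓ hℓ
    apply one_div_le_one_div_of_le (by positivity)
    have : (0:ℝ) ≤ (k:ℝ) := hk0.le
    nlinarith [hge ℓ hℓ]
  calc ∑ ℓ ∈ G, (1:ℝ)/((ℓ:ℝ)*(k:ℝ)) ≤ G.card • ((1:ℝ)/(t*(k:ℝ))) :=
        Finset.sum_le_card_nsmul _ _ _ hterm
    _ = (G.card : ℝ)/(t*(k:ℝ)) := by rw [nsmul_eq_mul]; ring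
    _ ≤ Real.log b / (t * Real.log t) := by
        rw [div_le_div_iff₀ (by positivity) (by positivity)]
        have hlb : (0:ℝ) ≤ Real.log b := Real.log_nonneg (by exact_mod_cast (by omega : 1 ≤ b))
        nlinarith [mul_le_mul_of_nonneg_left hcount ht0.le]

lemma my_fiber_large {b k : ℕ} (hb : 2 ≤ b) (hk : 1 ≤ k) (G : Finset ℕ)
    (hG : ∀ ℓ ∈ G, ℓ.Prime ∧ ¬ ℓ ∣ b ∧ orderOf ((b : ZMod ℓ)) = k) :
    ∑ ℓ ∈ G, (1:ℝ)/((ℓ:ℝ)*(k:ℝ)) ≤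
      ((2 + Real.log (Real.log b / Real.log 2)) + Real.log k)/(k:ℝ)^2 := by
  classical
  set C := Real.log b / Real.log 2 with hC
  have hlog2 : (0:ℝ) < Real.log 2 := Real.log_pos (by norm_num)
  have hlogb : Real.log 2 ≤ Real.log b := Real.log_le_log (by norm_num) (by exact_mod_cast hb)
  have hC1 : (1:ℝ) ≤ C := (one_le_div hlog2).mpr hlogb
  have hlogC : 0 ≤ Real.log C := Real.log_nonneg hC1
  have hk0 : (0:ℝ) < (k:ℝ) := by exact_mod_cast hk
  have hlogk : 0 ≤ Real.log k := Real.log_nonneg (by exact_mod_cast hk)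
  rcases G.eq_empty_or_nonempty with rfl | hne
  · simp
    positivity
  -- congruence facts
  have hdvd : ∀ ℓ ∈ G, k ∣ ℓ - 1 := by
    intro ℓ hℓ
    have h := my_ord_dvd (hG ℓ hℓ).1 (hG ℓ hℓ).2.1
    rwa [(hG ℓ hℓ).2.2] at h
  have hl2 : ∀ ℓ ∈ G, 2 ≤ ℓ := fun ℓ hℓ => (hG ℓ hℓ).1.two_le
  set f : ℕ → ℕ := fun ℓ => (ℓ - 1)/k with hf
  have hkey : ∀ ℓ ∈ G, k * f ℓ = ℓ - 1 := fun ℓ hℓ => Nat.mul_div_cancel' (hdvd ℓ hℓ)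
  have hf1 : ∀ ℓ ∈ G, 1 ≤ f ℓ := by
    intro ℓ hℓ
    have h1 := hkey ℓ hℓ
    have h2 := hl2 ℓ hℓ
    rcases Nat.eq_zero_or_pos (f ℓ) with h0 | h
    · rw [h0] at h1; omega
    · exact h
  have hinj : Set.InjOn f G := by
    intro x hx y hy hxy
    have h1 := hkey x hx
    have h2 := hkey y hy
    have := hl2 x hx
    have := hl2 y hy
    rw [hxy] at h1
    omega
  -- sum bound via image
  have hstep : ∑ ℓ ∈ G, (1:ℝ)/((ℓ:ℝ)*(k:ℝ)) ≤
      (1/(k:ℝ)^2) * ∑ m ∈ G.image f, (1:ℝ)/(m:ℝ) := by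
    rw [Finset.sum_image hinj, Finset.mul_sum]
    apply Finset.sum_le_sum
    intro ℓ hℓ
    have h1 := hkey ℓ hℓ
    have h2 := hl2 ℓ hℓ
    have hfl : (1:ℝ) ≤ (f ℓ : ℝ) := by exact_mod_cast hf1 ℓ hℓ
    have hkm : (k:ℝ) * (f ℓ : ℝ) ≤ (ℓ:ℝ) := by
      have : k * f ℓ ≤ ℓ := by omega
      exact_mod_cast this
    rw [div_mul_div_comm, one_mul]
    apply one_div_le_one_div_of_le (by positivity)
    nlinarith [hkm, hk0]
  -- bound the image sum
  have himg : ∑ m ∈ G.image f, (1:ℝ)/(m:ℝ) ≤ 2 + Real.log (G.card) := by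
    have := my_sum_inv_le (G.image f) (by
      intro m hm
      obtain ⟨ℓ, hℓ, rfl⟩ := Finset.mem_image.mp hm
      exact hf1 ℓ hℓ)
    rwa [Finset.card_image_of_injOn hinj] at this
  -- card bound
  have hcard : (G.card : ℝ) * Real.log 2 ≤ (k:ℝ) * Real.log b :=
    my_card_log_le hb hk G (by norm_num) (fun ℓ hℓ => ⟨(hG ℓ hℓ).1, (hG ℓ hℓ).2.2⟩)
      (fun ℓ hℓ => by exact_mod_cast hl2 ℓ hℓ)
  have hn1 : 1 ≤ G.card := Finset.card_pos.mpr hne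
  have hn1' : (1:ℝ) ≤ (G.card:ℝ) := by exact_mod_cast hn1
  have hlogn : Real.log (G.card) ≤ Real.log C + Real.log k := by
    have hnCk : (G.card : ℝ) ≤ C * k := by
      rw [hC, div_mul_eq_mul_div, le_div_iff₀ hlog2]
      nlinarith [hcard]
    calc Real.log (G.card) ≤ Real.log (C * k) := Real.log_le_log (by linarith) hnCk
      _ = Real.log C + Real.log k := Real.log_mul (by linarith) hk0.ne'
  calc ∑ ℓ ∈ G, (1:ℝ)/((ℓ:ℝ)*(k:ℝ))
      ≤ (1/(k:ℝ)^2) * ∑ m ∈ G.image f, (1:ℝ)/(m:ℝ) := hstep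
    _ ≤ (1/(k:ℝ)^2) * (2 + Real.log (G.card)) := by
        apply mul_le_mul_of_nonneg_left himg (by positivity)
    _ ≤ (1/(k:ℝ)^2) * (2 + (Real.log C + Real.log k)) := by
        apply mul_le_mul_of_nonneg_left (by linarith) (by positivity)
    _ = ((2 + Real.log C) + Real.log k)/(k:ℝ)^2 := by ring

lemma my_main_bound (b : ℕ) (hb : 2 ≤ b) (t : ℝ) (ht : Real.exp 1 ≤ t) (F : Finset ℕ)
    (hF : ∀ ℓ ∈ F, ℓ.Prime ∧ ¬ ℓ ∣ b ∧ t ≤ (ℓ:ℝ)) :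
    ∑ ℓ ∈ F, (1:ℝ)/((ℓ:ℝ) * ((orderOf ((b : ZMod ℓ))) : ℝ)) ≤
      (Real.log b + 2*Real.log (Real.log b/Real.log 2) + 2*Real.log 2 + 9) / Real.sqrt t := by
  classical
  set C := Real.log b / Real.log 2 with hC
  set a : ℝ := 2 + Real.log C with ha
  have hlog2 : (0:ℝ) < Real.log 2 := Real.log_pos (by norm_num)
  have hlogb : Real.log 2 ≤ Real.log b := Real.log_le_log (by norm_num) (by exact_mod_cast hb)
  have hlogb0 : (0:ℝ) < Real.log b := lt_of_lt_of_le hlog2 hlogb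
  have hC1 : (1:ℝ) ≤ C := (one_le_div hlog2).mpr hlogb
  have hlogC : 0 ≤ Real.log C := Real.log_nonneg hC1
  have ha1 : 1 ≤ a := by rw [ha]; linarith
  have ht1 : (1:ℝ) ≤ t := le_trans (by linarith [Real.add_one_le_exp (1:ℝ)]) ht
  have ht0 : (0:ℝ) < t := by linarith
  have hlt : 1 ≤ Real.log t := by
    rw [show (1:ℝ) = Real.log (Real.exp 1) by rw [Real.log_exp]]
    exact Real.log_le_log (Real.exp_pos 1) ht
  have hst1 : (1:ℝ) ≤ Real.sqrt t := by
    rw [show (1:ℝ) = Real.sqrt 1 by simp]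
    exact Real.sqrt_le_sqrt ht1
  have hst0 : (0:ℝ) < Real.sqrt t := by linarith
  set y : ℝ := Real.sqrt t * Real.log t with hy
  have hy1 : (1:ℝ) ≤ y := by rw [hy]; nlinarith
  have hy0 : (0:ℝ) < y := by linarith
  set g : ℕ → ℕ := fun ℓ => orderOf ((b : ZMod ℓ)) with hg
  -- each k in the image is ≥ 1
  have himk : ∀ k ∈ F.image g, 1 ≤ k := by
    intro k hk
    obtain ⟨ℓ, hℓ, rfl⟩ := Finset.mem_image.mp hk
    exact my_ord_pos (hF ℓ hℓ).1 (hF ℓ hℓ).2.1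
  -- fiber facts
  have hfib : ∀ k, ∀ ℓ ∈ F.filter (fun ℓ => g ℓ = k),
      ℓ.Prime ∧ ¬ ℓ ∣ b ∧ orderOf ((b : ZMod ℓ)) = k ∧ t ≤ (ℓ:ℝ) := by
    intro k ℓ hℓ
    rw [Finset.mem_filter] at hℓ
    exact ⟨(hF ℓ hℓ.1).1, (hF ℓ hℓ.1).2.1, hℓ.2, (hF ℓ hℓ.1).2.2⟩
  -- rewrite sum fiberwise
  have hmaps : ∀ ℓ ∈ F, g ℓ ∈ F.image g := fun ℓ h => Finset.mem_image_of_mem g h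
  rw [← Finset.sum_fiberwise_of_maps_to hmaps (fun ℓ => (1:ℝ)/((ℓ:ℝ) * ((orderOf ((b : ZMod ℓ))) : ℝ)))]
  -- rewrite each fiber sum with k
  have hfibsum : ∀ k ∈ F.image g,
      ∑ ℓ ∈ F.filter (fun ℓ => g ℓ = k), (1:ℝ)/((ℓ:ℝ) * ((orderOf ((b : ZMod ℓ))) : ℝ))
        = ∑ ℓ ∈ F.filter (fun ℓ => g ℓ = k), (1:ℝ)/((ℓ:ℝ) * (k:ℝ)) := by
    intro k _
    apply Finset.sum_congr rfl
    intro ℓ hℓ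
    rw [Finset.mem_filter] at hℓ
    rw [show orderOf ((b : ZMod ℓ)) = k from hℓ.2]
  rw [Finset.sum_congr rfl hfibsum]
  -- split by size of k
  rw [← Finset.sum_filter_add_sum_filter_not (F.image g) (fun k : ℕ => (k:ℝ) ≤ y)]
  -- Part 1
  have hpart1 : ∑ k ∈ (F.image g).filter (fun k : ℕ => (k:ℝ) ≤ y),
      ∑ ℓ ∈ F.filter (fun ℓ => g ℓ = k), (1:ℝ)/((ℓ:ℝ) * (k:ℝ)) ≤ Real.log b / Real.sqrt t := by
    have hbound : ∀ k ∈ (F.image g).filter (fun k : ℕ => (k:ℝ) ≤ y),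
        ∑ ℓ ∈ F.filter (fun ℓ => g ℓ = k), (1:ℝ)/((ℓ:ℝ) * (k:ℝ))
          ≤ Real.log b / (t * Real.log t) := by
      intro k hk
      rw [Finset.mem_filter] at hk
      exact my_fiber_small hb (himk k hk.1) _ ht
        (fun ℓ hℓ => ⟨(hfib k ℓ hℓ).1, (hfib k ℓ hℓ).2.2.1⟩)
        (fun ℓ hℓ => (hfib k ℓ hℓ).2.2.2)
    have hcard : (((F.image g).filter (fun k : ℕ => (k:ℝ) ≤ y)).card : ℝ) ≤ y := by
      have hsub : (F.image g).filter (fun k : ℕ => (k:ℝ) ≤ y) ⊆ Finset.Icc 1 ⌊y⌋₊ := by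
        intro k hk
        rw [Finset.mem_filter] at hk
        rw [Finset.mem_Icc]
        exact ⟨himk k hk.1, Nat.le_floor hk.2⟩
      calc (((F.image g).filter (fun k : ℕ => (k:ℝ) ≤ y)).card : ℝ)
          ≤ ((Finset.Icc 1 ⌊y⌋₊).card : ℝ) := by
            exact_mod_cast Finset.card_le_card hsub
        _ = (⌊y⌋₊ : ℝ) := by rw [Nat.card_Icc]; simp
        _ ≤ y := Nat.floor_le hy0.le
    calc ∑ k ∈ (F.image g).filter (fun k : ℕ => (k:ℝ) ≤ y),
          ∑ ℓ ∈ F.filter (fun ℓ => g ℓ = k), (1:ℝ)/((ℓ:ℝ) * (k:ℝ))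
        ≤ ((F.image g).filter (fun k : ℕ => (k:ℝ) ≤ y)).card • (Real.log b / (t * Real.log t)) :=
          Finset.sum_le_card_nsmul _ _ _ hbound
      _ = (((F.image g).filter (fun k : ℕ => (k:ℝ) ≤ y)).card : ℝ) * (Real.log b / (t * Real.log t)) := by
          rw [nsmul_eq_mul]
      _ ≤ y * (Real.log b / (t * Real.log t)) := by
          apply mul_le_mul_of_nonneg_right hcard (by positivity)
      _ = Real.log b / Real.sqrt t := by
          rw [hy]
          field_simp
          linear_combination Real.mul_self_sqrt ht0.le
  -- Part 2
  have hpart2 : ∑ k ∈ (F.image g).filter (fun k : ℕ => ¬ (k:ℝ) ≤ y),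
      ∑ ℓ ∈ F.filter (fun ℓ => g ℓ = k), (1:ℝ)/((ℓ:ℝ) * (k:ℝ))
        ≤ (2*(a + 1 + Real.log 2) + 3) / Real.sqrt t := by
    set m : ℕ := ⌊y⌋₊ + 1 with hm
    have hm1 : 1 ≤ m := by omega
    have hym : y ≤ (m:ℝ) := by
      rw [hm]
      push_cast
      exact (Nat.lt_floor_add_one y).le
    have hm2y : (m:ℝ) ≤ 2*y := by
      rw [hm]
      push_cast
      have := Nat.floor_le hy0.le
      linarith
    have hstep1 : ∑ k ∈ (F.image g).filter (fun k : ℕ => ¬ (k:ℝ) ≤ y),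
        ∑ ℓ ∈ F.filter (fun ℓ => g ℓ = k), (1:ℝ)/((ℓ:ℝ) * (k:ℝ))
          ≤ ∑ k ∈ (F.image g).filter (fun k : ℕ => ¬ (k:ℝ) ≤ y), (a + Real.log k)/(k:ℝ)^2 := by
      apply Finset.sum_le_sum
      intro k hk
      rw [Finset.mem_filter] at hk
      have := my_fiber_large hb (himk k hk.1) (F.filter (fun ℓ => g ℓ = k))
        (fun ℓ hℓ => ⟨(hfib k ℓ hℓ).1, (hfib k ℓ hℓ).2.1, (hfib k ℓ hℓ).2.2.1⟩)
      rw [ha]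
      exact this
    have hstep2 : ∑ k ∈ (F.image g).filter (fun k : ℕ => ¬ (k:ℝ) ≤ y), (a + Real.log k)/(k:ℝ)^2
        ≤ 2*(a + 1 + Real.log m)/(m:ℝ) := by
      apply my_sum_tail ha1 hm1
      intro k hk
      rw [Finset.mem_filter] at hk
      have : y < (k:ℝ) := lt_of_not_ge hk.2
      have : ⌊y⌋₊ < k := (Nat.floor_lt hy0.le).mpr this
      omega
    have hstep3 : 2*(a + 1 + Real.log m)/(m:ℝ) ≤ (2*(a + 1 + Real.log 2) + 3) / Real.sqrt t := by
      have hlogm : Real.log m ≤ Real.log 2 + Real.log y := by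
        calc Real.log m ≤ Real.log (2*y) := Real.log_le_log (by exact_mod_cast hm1) hm2y
          _ = Real.log 2 + Real.log y := Real.log_mul (by norm_num) hy0.ne'
      have hlogy : Real.log y ≤ (3/2) * Real.log t := by
        rw [hy, Real.log_mul hst0.ne' (by linarith : Real.log t ≠ 0), Real.log_sqrt ht0.le]
        have h1 : Real.log (Real.log t) ≤ Real.log t - 1 :=
          Real.log_le_sub_one_of_pos (by linarith)
        linarith
      have hnum : 2*(a + 1 + Real.log m) ≤ 2*(a + 1 + Real.log 2) + 3 * Real.log t := by
        linarith
      calc 2*(a + 1 + Real.log m)/(m:ℝ)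
          ≤ (2*(a + 1 + Real.log 2) + 3 * Real.log t)/y := by
            apply div_le_div₀ ?_ hnum hy0 hym
            have : (0:ℝ) ≤ Real.log t := by linarith
            linarith [hlog2]
        _ ≤ (2*(a + 1 + Real.log 2) + 3) / Real.sqrt t := by
            rw [hy, div_le_div_iff₀ (by positivity) (by positivity)]
            have hA : (0:ℝ) ≤ 2*(a + 1 + Real.log 2) := by linarith [hlog2]
            nlinarith [mul_le_mul_of_nonneg_left hlt hA, hst0, hlt]
    linarith
  have hfinal : Real.log b / Real.sqrt t + (2*(a + 1 + Real.log 2) + 3) / Real.sqrt t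
      = (Real.log b + 2*Real.log (Real.log b/Real.log 2) + 2*Real.log 2 + 9) / Real.sqrt t := by
    rw [ha, hC]
    field_simp
    ring
  linarith

lemma my_all_t (b : ℕ) (hb : 2 ≤ b) (t : ℝ) (ht : 1 ≤ t) (F : Finset ℕ)
    (hF : ∀ ℓ ∈ F, ℓ.Prime ∧ ¬ ℓ ∣ b ∧ t ≤ (ℓ:ℝ)) :
    ∑ ℓ ∈ F, (1:ℝ)/((ℓ:ℝ) * ((orderOf ((b : ZMod ℓ))) : ℝ)) ≤
      (2*((Real.log b + 2*Real.log (Real.log b/Real.log 2) + 2*Real.log 2 + 9) + 1)) / Real.sqrt t := by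
  classical
  set K1 : ℝ := Real.log b + 2*Real.log (Real.log b/Real.log 2) + 2*Real.log 2 + 9 with hK1def
  have hlog2 : (0:ℝ) < Real.log 2 := Real.log_pos (by norm_num)
  have hlogb : Real.log 2 ≤ Real.log b := Real.log_le_log (by norm_num) (by exact_mod_cast hb)
  have hC1 : (1:ℝ) ≤ Real.log b / Real.log 2 := (one_le_div hlog2).mpr hlogb
  have hlogC : 0 ≤ Real.log (Real.log b / Real.log 2) := Real.log_nonneg hC1
  have hK1 : 9 ≤ K1 := by rw [hK1def]; linarith
  have ht0 : (0:ℝ) < t := by linarith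
  have hst0 : (0:ℝ) < Real.sqrt t := Real.sqrt_pos.mpr ht0
  rcases le_or_gt (Real.exp 1) t with hcase | hcase
  · calc ∑ ℓ ∈ F, (1:ℝ)/((ℓ:ℝ) * ((orderOf ((b : ZMod ℓ))) : ℝ))
        ≤ K1 / Real.sqrt t := my_main_bound b hb t hcase F hF
      _ ≤ (2*(K1+1)) / Real.sqrt t := by
          gcongr
          linarith
  · -- small t
    have he3 : Real.exp 1 < 3 := lt_trans Real.exp_one_lt_d9 (by norm_num)
    have he1 : (1:ℝ) ≤ Real.exp 1 := by linarith [Real.add_one_le_exp (1:ℝ)]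
    have hsplit := Finset.sum_filter_add_sum_filter_not F (fun ℓ : ℕ => Real.exp 1 ≤ (ℓ:ℝ))
      (fun ℓ => (1:ℝ)/((ℓ:ℝ) * ((orderOf ((b : ZMod ℓ))) : ℝ)))
    have h1 : ∑ ℓ ∈ F.filter (fun ℓ : ℕ => Real.exp 1 ≤ (ℓ:ℝ)),
        (1:ℝ)/((ℓ:ℝ) * ((orderOf ((b : ZMod ℓ))) : ℝ)) ≤ K1 / Real.sqrt (Real.exp 1) := by
      apply my_main_bound b hb _ le_rfl
      intro ℓ hℓ
      rw [Finset.mem_filter] at hℓ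
      exact ⟨(hF ℓ hℓ.1).1, (hF ℓ hℓ.1).2.1, hℓ.2⟩
    have h2 : ∑ ℓ ∈ F.filter (fun ℓ : ℕ => ¬ Real.exp 1 ≤ (ℓ:ℝ)),
        (1:ℝ)/((ℓ:ℝ) * ((orderOf ((b : ZMod ℓ))) : ℝ)) ≤ 1/2 := by
      have hsub : F.filter (fun ℓ : ℕ => ¬ Real.exp 1 ≤ (ℓ:ℝ)) ⊆ {2} := by
        intro ℓ hℓ
        rw [Finset.mem_filter] at hℓ
        have h2 := (hF ℓ hℓ.1).1.two_le
        have : (ℓ:ℝ) < 3 := lt_trans (lt_of_not_ge hℓ.2) he3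
        have : ℓ < 3 := by exact_mod_cast this
        interval_cases ℓ
        · simp
      have hterm : ∀ ℓ ∈ F.filter (fun ℓ : ℕ => ¬ Real.exp 1 ≤ (ℓ:ℝ)),
          (1:ℝ)/((ℓ:ℝ) * ((orderOf ((b : ZMod ℓ))) : ℝ)) ≤ 1/2 := by
        intro ℓ hℓ
        rw [Finset.mem_filter] at hℓ
        have hp := (hF ℓ hℓ.1).1
        have hord : 1 ≤ orderOf ((b : ZMod ℓ)) := my_ord_pos hp (hF ℓ hℓ.1).2.1
        have h2l : (2:ℝ) ≤ (ℓ:ℝ) := by exact_mod_cast hp.two_le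
        have hordR : (1:ℝ) ≤ ((orderOf ((b : ZMod ℓ))):ℝ) := by exact_mod_cast hord
        rw [div_le_div_iff₀ (by nlinarith) (by norm_num)]
        nlinarith
      calc ∑ ℓ ∈ F.filter (fun ℓ : ℕ => ¬ Real.exp 1 ≤ (ℓ:ℝ)),
            (1:ℝ)/((ℓ:ℝ) * ((orderOf ((b : ZMod ℓ))) : ℝ))
          ≤ (F.filter (fun ℓ : ℕ => ¬ Real.exp 1 ≤ (ℓ:ℝ))).card • ((1:ℝ)/2) :=
            Finset.sum_le_card_nsmul _ _ _ hterm
        _ ≤ 1 • ((1:ℝ)/2) := by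
            apply smul_le_smul_of_nonneg_right ?_ (by norm_num)
            simpa using Finset.card_le_card hsub
        _ = 1/2 := by norm_num
    have hse : Real.sqrt (Real.exp 1) ≤ 2 := by
      rw [show (2:ℝ) = Real.sqrt 4 by rw [show (4:ℝ) = 2^2 by norm_num, Real.sqrt_sq (by norm_num)]]
      exact Real.sqrt_le_sqrt (by linarith)
    have hse0 : 0 < Real.sqrt (Real.exp 1) := Real.sqrt_pos.mpr (Real.exp_pos 1)
    have hmono : (2*(K1+1)) / Real.sqrt (Real.exp 1) ≤ (2*(K1+1)) / Real.sqrt t := by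
      apply div_le_div_of_nonneg_left (by linarith) hst0
      exact Real.sqrt_le_sqrt hcase.le
    have hkey : K1 / Real.sqrt (Real.exp 1) + 1/2 ≤ (2*(K1+1)) / Real.sqrt (Real.exp 1) := by
      rw [div_add' _ _ _ hse0.ne', div_le_div_iff₀ hse0 hse0]
      nlinarith
    linarith

/-- For every integer `b ≥ 2` there exists `K > 0` (depending only on `b`) such that for all
real `t ≥ 1`, the sum `∑ 1/(ℓ·ord_ℓ(b))` over primes `ℓ ≥ t` with `ℓ ∤ b` is at most
`K · t^(-1/2)`. Here `ord_ℓ(b)` is the multiplicative order of `b` modulo `ℓ`. -/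
theorem stmt0 (b : ℕ) (hb : 2 ≤ b) :
    ∃ K : ℝ, 0 < K ∧ ∀ t : ℝ, 1 ≤ t →
      Summable (fun ℓ : {ℓ : ℕ // ℓ.Prime ∧ ¬ℓ ∣ b ∧ t ≤ (ℓ : ℝ)} =>
        (1 : ℝ) / (((ℓ : ℕ) : ℝ) * (orderOf ((b : ZMod (ℓ : ℕ))) : ℝ))) ∧
      ∑' ℓ : {ℓ : ℕ // ℓ.Prime ∧ ¬ℓ ∣ b ∧ t ≤ (ℓ : ℝ)},
        (1 : ℝ) / (((ℓ : ℕ) : ℝ) * (orderOf ((b : ZMod (ℓ : ℕ))) : ℝ))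
      ≤ K * t ^ (-(1 / 2 : ℝ)) := by
  classical
  set K1 : ℝ := Real.log b + 2*Real.log (Real.log b/Real.log 2) + 2*Real.log 2 + 9 with hK1def
  have hlog2 : (0:ℝ) < Real.log 2 := Real.log_pos (by norm_num)
  have hlogb : Real.log 2 ≤ Real.log b := Real.log_le_log (by norm_num) (by exact_mod_cast hb)
  have hC1 : (1:ℝ) ≤ Real.log b / Real.log 2 := (one_le_div hlog2).mpr hlogb
  have hlogC : 0 ≤ Real.log (Real.log b / Real.log 2) := Real.log_nonneg hC1
  have hK1 : 9 ≤ K1 := by rw [hK1def]; linarith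
  refine ⟨2*(K1+1), by linarith, ?_⟩
  intro t ht
  have ht0 : (0:ℝ) < t := by linarith
  have hst0 : (0:ℝ) < Real.sqrt t := Real.sqrt_pos.mpr ht0
  have hrpow : t ^ (-(1/2 : ℝ)) = (Real.sqrt t)⁻¹ := by
    rw [Real.rpow_neg ht0.le, ← Real.sqrt_eq_rpow]
  set f : {ℓ : ℕ // ℓ.Prime ∧ ¬ℓ ∣ b ∧ t ≤ (ℓ : ℝ)} → ℝ :=
    fun ℓ => (1 : ℝ) / (((ℓ : ℕ) : ℝ) * (orderOf ((b : ZMod (ℓ : ℕ))) : ℝ)) with hf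
  have hnonneg : 0 ≤ f := by
    intro x
    rw [hf]
    positivity
  have hbound : ∀ u : Finset {ℓ : ℕ // ℓ.Prime ∧ ¬ℓ ∣ b ∧ t ≤ (ℓ : ℝ)},
      ∑ x ∈ u, f x ≤ 2*(K1+1) * t ^ (-(1/2 : ℝ)) := by
    intro u
    have hinj : Set.InjOn (fun x : {ℓ : ℕ // ℓ.Prime ∧ ¬ℓ ∣ b ∧ t ≤ (ℓ : ℝ)} => (x : ℕ)) u :=
      fun x _ y _ h => Subtype.ext h
    have himg : ∑ ℓ ∈ u.image (fun x : {ℓ : ℕ // ℓ.Prime ∧ ¬ℓ ∣ b ∧ t ≤ (ℓ : ℝ)} => (x : ℕ)),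
        (1:ℝ)/((ℓ:ℝ) * ((orderOf ((b : ZMod ℓ))) : ℝ)) = ∑ x ∈ u, f x :=
      Finset.sum_image hinj
    rw [← himg]
    have happ := my_all_t b hb t ht
      (u.image (fun x : {ℓ : ℕ // ℓ.Prime ∧ ¬ℓ ∣ b ∧ t ≤ (ℓ : ℝ)} => (x : ℕ)))
      (by
        intro ℓ hℓ
        obtain ⟨x, _, rfl⟩ := Finset.mem_image.mp hℓ
        exact x.2)
    rw [hrpow]
    calc _ ≤ (2*(K1+1)) / Real.sqrt t := happ
      _ = 2*(K1+1) * (Real.sqrt t)⁻¹ := by rw [div_eq_mul_inv]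
  exact ⟨summable_of_sum_le hnonneg hbound,
    Summable.tsum_le_of_sum_le (summable_of_sum_le hnonneg hbound) hbound⟩
end

section
/- For every integer b ≥ 2 there exists a constant K > 0 (depending only on b) such that for all real t ≥ 1, the sum ∑ 1/(ℓ·ord_ℓ(b)), taken over all primes ℓ with ℓ ∤ b and ℓ·ord_ℓ(b) ≥ t, is at most K·t^{−1/3}. -/
open Finset

/-- AM-GM step: for `0 < c ≤ 1` and `1 ≤ x`, `c * x^(c-1) ≤ x^c - (x-1)^c`. -/
lemma step_low {c : ℝ} (hc : 0 < c) (hc1 : c ≤ 1) {x : ℝ} (hx : 1 ≤ x) :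
    c * x ^ (c - 1) ≤ x ^ c - (x - 1) ^ c := by
  have hx0 : (0:ℝ) < x := lt_of_lt_of_le one_pos hx
  have h1 : (x-1) ^ c * x ^ (1-c) ≤ c * (x-1) + (1-c) * x :=
    Real.geom_mean_le_arith_mean2_weighted (w₁ := c) (w₂ := 1-c) (p₁ := x-1) (p₂ := x)
      (le_of_lt hc) (by linarith) (by linarith) (le_of_lt hx0) (by ring)
  have h2 : (x-1) ^ c * x ^ (1-c) * x ^ (c-1) = (x-1)^c := by
    rw [mul_assoc, ← Real.rpow_add hx0]
    norm_num
  have h3 : (c * (x-1) + (1-c) * x) * x ^ (c-1) = x ^ c - c * x ^ (c-1) := by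
    have hxx : x * x ^ (c-1) = x ^ c := by
      rw [← Real.rpow_one_add' (le_of_lt hx0) (by norm_num; intro h; linarith)]
      norm_num
    have e : (c * (x-1) + (1-c) * x) = x - c := by ring
    rw [e, sub_mul, hxx]
  have h4 := mul_le_mul_of_nonneg_right h1 (Real.rpow_nonneg (le_of_lt hx0) (c-1))
  rw [h2, h3] at h4
  linarith

lemma step_tail {γ : ℝ} (hγ : 0 < γ) (hγ1 : γ ≤ 1) {x : ℝ} (hx : 2 ≤ x) :
    γ * x ^ (-(1+γ)) ≤ (x-1) ^ (-γ) - x ^ (-γ) := by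
  have hx0 : (0:ℝ) < x := by linarith
  have hx1 : (0:ℝ) < x - 1 := by linarith
  set u := x⁻¹ with hu_def
  set v := (x-1)⁻¹ with hv_def
  have hu : 0 < u := inv_pos.mpr hx0
  have hv : 0 < v := inv_pos.mpr hx1
  have huv : u ≤ v := by
    apply inv_anti₀ hx1; linarith
  have hkey : v - u = u * v := by
    rw [hu_def, hv_def]; field_simp; ring
  have amgm : (u/v) ^ γ * (1:ℝ) ^ (1-γ) ≤ γ * (u/v) + (1-γ) * 1 :=
    Real.geom_mean_le_arith_mean2_weighted (w₁ := γ) (w₂ := 1-γ) (p₁ := u/v) (p₂ := 1)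
      hγ.le (by linarith) (by positivity) zero_le_one (by ring)
  rw [Real.one_rpow, mul_one, mul_one] at amgm
  have h2 : (u/v) ^ γ * v ^ γ = u ^ γ := by
    rw [← Real.mul_rpow (by positivity) hv.le, div_mul_cancel₀ _ hv.ne']
  have h3 := mul_le_mul_of_nonneg_right amgm (Real.rpow_nonneg hv.le γ)
  rw [h2] at h3
  have e2 : u / v = 1 - u := by
    rw [div_eq_iff hv.ne']; nlinarith [hkey]
  rw [e2] at h3
  have h4 : γ * u * v ^ γ ≤ v ^ γ - u ^ γ := by nlinarith [h3]
  have h5 : u ^ γ ≤ v ^ γ := Real.rpow_le_rpow hu.le huv hγ.le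
  have h6 : γ * u * u ^ γ ≤ γ * u * v ^ γ :=
    mul_le_mul_of_nonneg_left h5 (by positivity)
  have e_u : u ^ γ = x ^ (-γ) := by
    rw [hu_def, Real.inv_rpow hx0.le, ← Real.rpow_neg hx0.le]
  have e_v : v ^ γ = (x-1) ^ (-γ) := by
    rw [hv_def, Real.inv_rpow hx1.le, ← Real.rpow_neg hx1.le]
  have e_x : x ^ (-(1+γ)) = u * u ^ γ := by
    rw [show -(1+γ) = (-1) + (-γ) by ring, Real.rpow_add hx0, Real.rpow_neg_one, e_u, hu_def]
  rw [e_x, ← e_u, ← e_v]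
  calc γ * (u * u ^ γ) = γ * u * u ^ γ := by ring
    _ ≤ γ * u * v ^ γ := h6
    _ ≤ v ^ γ - u ^ γ := h4

open Finset

lemma sum_Icc_rpow_le {c : ℝ} (hc : 0 < c) (hc1 : c ≤ 1) (k : ℕ) :
    ∑ i ∈ Icc 1 k, ((i:ℝ)) ^ (c - 1) ≤ (1/c) * (k:ℝ) ^ c := by
  have h1 : ∑ i ∈ Icc 1 k, ((i:ℝ)) ^ (c - 1)
      ≤ ∑ i ∈ Icc 1 k, (1/c) * (((i:ℝ)) ^ c - (((i:ℝ)) - 1) ^ c) := by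
    apply Finset.sum_le_sum
    intro i hi
    have hi1 : (1:ℝ) ≤ (i:ℝ) := by exact_mod_cast (Finset.mem_Icc.mp hi).1
    have h := step_low hc hc1 hi1
    have : (i:ℝ) ^ (c-1) = (1/c) * (c * (i:ℝ) ^ (c-1)) := by field_simp
    rw [this]
    exact mul_le_mul_of_nonneg_left h (by positivity)
  refine h1.trans ?_
  rw [← Finset.mul_sum]
  apply mul_le_mul_of_nonneg_left _ (by positivity)
  have e : ∑ i ∈ Icc 1 k, (((i:ℝ)) ^ c - (((i:ℝ)) - 1) ^ c)
      = ∑ j ∈ range k, ((((j+1:ℕ)):ℝ) ^ c - ((j:ℕ):ℝ) ^ c) := by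
    rw [← Finset.Ico_add_one_right_eq_Icc, Finset.sum_Ico_eq_sum_range]
    apply Finset.sum_congr rfl
    intro j _
    have : ((1 + j : ℕ) : ℝ) = ((j + 1 : ℕ) : ℝ) := by push_cast; ring
    rw [this]
    push_cast
    ring_nf
  rw [e, Finset.sum_range_sub (fun j => ((j:ℕ):ℝ) ^ c)]
  simp [Real.zero_rpow hc.ne']

lemma sum_Icc_tail_rpow_le {γ : ℝ} (hγ : 0 < γ) (hγ1 : γ ≤ 1) {n : ℕ} (M : ℕ) (hn : 2 ≤ n) :
    ∑ d ∈ Icc n M, ((d:ℝ)) ^ (-(1+γ)) ≤ (1/γ) * ((n:ℝ) - 1) ^ (-γ) := by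
  set G : ℕ → ℝ := fun j => (((n - 1 + j : ℕ)):ℝ) ^ (-γ) with hG
  have h1 : ∑ d ∈ Icc n M, ((d:ℝ)) ^ (-(1+γ))
      ≤ ∑ d ∈ Icc n M, (1/γ) * ((((d:ℝ)) - 1) ^ (-γ) - ((d:ℝ)) ^ (-γ)) := by
    apply Finset.sum_le_sum
    intro d hd
    have hd2 : (2:ℝ) ≤ (d:ℝ) := by exact_mod_cast hn.trans (Finset.mem_Icc.mp hd).1
    have h := step_tail hγ hγ1 hd2
    have : (d:ℝ) ^ (-(1+γ)) = (1/γ) * (γ * (d:ℝ) ^ (-(1+γ))) := by field_simp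
    rw [this]
    exact mul_le_mul_of_nonneg_left h (by positivity)
  refine h1.trans ?_
  rw [← Finset.mul_sum]
  apply mul_le_mul_of_nonneg_left _ (by positivity)
  have e : ∑ d ∈ Icc n M, ((((d:ℝ)) - 1) ^ (-γ) - ((d:ℝ)) ^ (-γ))
      = ∑ j ∈ range (M + 1 - n), (G j - G (j+1)) := by
    rw [← Finset.Ico_add_one_right_eq_Icc, Finset.sum_Ico_eq_sum_range]
    apply Finset.sum_congr rfl
    intro j _
    have e1 : (n - 1 + j) + 1 = n + j := by omega
    have e2 : (n - 1 + (j + 1)) = n + j := by omega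
    have c1 : (((n - 1 + j : ℕ)):ℝ) = ((n + j : ℕ) : ℝ) - 1 := by
      have := congrArg (fun m : ℕ => (m:ℝ)) e1
      simp only [Nat.cast_add, Nat.cast_one] at this
      push_cast
      push_cast at this
      linarith
    simp only [hG, e2, c1]
  rw [e]
  have tele : ∑ j ∈ range (M + 1 - n), (G j - G (j+1)) = G 0 - G (M + 1 - n) := by
    have := Finset.sum_range_sub (fun j => -(G j)) (M + 1 - n)
    simp only [neg_sub_neg] at this
    rw [this]
  rw [tele]
  have hnn : (0:ℝ) ≤ G (M + 1 - n) := Real.rpow_nonneg (by positivity) _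
  have ecast : ((n:ℝ) - 1) ^ (-γ) = G 0 := by
    have h1n : (1:ℕ) ≤ n := by omega
    have : ((n - 1 + 0 : ℕ) : ℝ) = (n:ℝ) - 1 := by
      have e1 : (n - 1 + 0) = n - 1 := by omega
      rw [e1, Nat.cast_sub h1n]
      norm_num
    simp only [hG, this]
  rw [ecast]
  linarith

open Finset

lemma sum_distinct_le (f : ℕ → ℝ)
    (hfa : ∀ i j, 1 ≤ i → i ≤ j → f j ≤ f i) :
    ∀ S : Finset ℕ, (∀ m ∈ S, 1 ≤ m) → ∑ m ∈ S, f m ≤ ∑ i ∈ Icc 1 S.card, f i := by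
  intro S
  induction S using Finset.strongInduction with
  | _ S ih =>
    intro hS
    rcases S.eq_empty_or_nonempty with rfl | hne
    · simp
    · set M := S.max' hne with hM
      have hMS : M ∈ S := S.max'_mem hne
      have hcard_le : S.card ≤ M := by
        have hsub : S ⊆ Icc 1 M := by
          intro x hx
          exact Finset.mem_Icc.mpr ⟨hS x hx, S.le_max' x hx⟩
        calc S.card ≤ (Icc 1 M).card := Finset.card_le_card hsub
          _ = M := by rw [Nat.card_Icc]; omega
      have hcard_pos : 1 ≤ S.card := Finset.card_pos.mpr hne |>.le.trans (le_refl _) |> fun _ => Finset.card_pos.mpr hne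
      have h1 : ∑ m ∈ S.erase M, f m + f M = ∑ m ∈ S, f m :=
        Finset.sum_erase_add S f hMS
      have h2 := ih (S.erase M) (Finset.erase_ssubset hMS) (fun m hm => hS m (Finset.mem_of_mem_erase hm))
      have hcarde : (S.erase M).card = S.card - 1 := Finset.card_erase_of_mem hMS
      have h3 : f M ≤ f S.card := hfa S.card M hcard_pos hcard_le
      have h4 : ∑ i ∈ Icc 1 (S.card - 1), f i + f S.card = ∑ i ∈ Icc 1 S.card, f i := by
        have : S.card - 1 + 1 = S.card := by omega
        rw [← this, Finset.sum_Icc_succ_top (by omega)]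
        rw [this]
      rw [← h1, ← h4]
      rw [hcarde] at h2
      linarith

section NT
variable {b ℓ : ℕ} (hb : 2 ≤ b) (hp : ℓ.Prime) (hd : ¬ℓ ∣ b)

lemma bcast_ne (hp : ℓ.Prime) (hd : ¬ℓ ∣ b) : (b : ZMod ℓ) ≠ 0 := by
  haveI : Fact ℓ.Prime := ⟨hp⟩
  rw [Ne, ZMod.natCast_eq_zero_iff]
  exact hd

lemma ord_pos (hp : ℓ.Prime) (hd : ¬ℓ ∣ b) : 1 ≤ orderOf (b : ZMod ℓ) := by
  haveI : Fact ℓ.Prime := ⟨hp⟩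
  have hu : IsUnit (b : ZMod ℓ) := (bcast_ne hp hd).isUnit
  obtain ⟨u, hu⟩ := hu
  rw [← hu, orderOf_units]
  exact (orderOf_pos u)

lemma ord_dvd_sub_one (hp : ℓ.Prime) (hd : ¬ℓ ∣ b) : orderOf (b : ZMod ℓ) ∣ ℓ - 1 := by
  haveI : Fact ℓ.Prime := ⟨hp⟩
  have hu : IsUnit (b : ZMod ℓ) := (bcast_ne hp hd).isUnit
  obtain ⟨u, hu⟩ := hu
  rw [← hu, orderOf_units]
  have := orderOf_dvd_card (G := (ZMod ℓ)ˣ) (x := u)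
  rwa [ZMod.card_units] at this

lemma dvd_pow_ord_sub_one (hb : 2 ≤ b) (hp : ℓ.Prime) (hd : ¬ℓ ∣ b) :
    ℓ ∣ b ^ (orderOf (b : ZMod ℓ)) - 1 := by
  haveI : Fact ℓ.Prime := ⟨hp⟩
  have hpow : ((b : ZMod ℓ)) ^ (orderOf (b : ZMod ℓ)) = 1 := pow_orderOf_eq_one _
  have h1 : (1:ℕ) ≤ b ^ (orderOf (b : ZMod ℓ)) := Nat.one_le_pow _ _ (by omega)
  rw [← ZMod.natCast_eq_zero_iff]
  push_cast [h1]
  rw [hpow]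
  ring
end NT

open Finset

-- pointwise interpolation bound
lemma point_bound {t L D M : ℝ} (ht : 0 < t) (hM : 1 ≤ M) (hD : 1 ≤ D)
    (h1 : t ≤ L * D) (h2 : M * D ≤ L) {c : ℝ} (hc : 0 < c) (hc1 : c ≤ 1) :
    1 / (L * D) ≤ t ^ (c - 1) * M ^ (-c) * D ^ (-(2*c)) := by
  have hD0 : (0:ℝ) < D := by linarith
  have hM0 : (0:ℝ) < M := by linarith
  have hL0 : (0:ℝ) < L := by nlinarith
  have hLD0 : (0:ℝ) < L * D := by positivity
  have hMDD : M * D * D ≤ L * D := by nlinarith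
  have e1 : L * D = (L*D) ^ (1-c) * (L*D) ^ c := by
    rw [← Real.rpow_add hLD0]; norm_num
  have i1 : t ^ (1-c) ≤ (L*D) ^ (1-c) := Real.rpow_le_rpow ht.le h1 (by linarith)
  have i2 : (M*D*D) ^ c ≤ (L*D) ^ c := Real.rpow_le_rpow (by positivity) hMDD hc.le
  have e2 : (M*D*D) ^ c = M ^ c * D ^ (2*c) := by
    rw [Real.mul_rpow (by positivity) hD0.le, Real.mul_rpow hM0.le hD0.le]
    rw [show (2:ℝ)*c = c + c by ring, Real.rpow_add hD0]
    ring
  have hR : t ^ (1-c) * (M ^ c * D ^ (2*c)) ≤ L * D := by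
    rw [e1]
    have := mul_le_mul i1 i2 (by positivity) (Real.rpow_nonneg hLD0.le _)
    rw [e2] at this
    linarith
  have hRpos : (0:ℝ) < t ^ (1-c) * (M ^ c * D ^ (2*c)) := by positivity
  rw [div_le_iff₀ hLD0]
  have a1 : t ^ (c-1) * t ^ (1-c) = 1 := by rw [← Real.rpow_add ht]; norm_num
  have a2 : M ^ (-c) * M ^ c = 1 := by rw [← Real.rpow_add hM0]; norm_num
  have a3 : D ^ (-(2*c)) * D ^ (2*c) = 1 := by rw [← Real.rpow_add hD0]; norm_num
  have key : (t ^ (c-1) * M ^ (-c) * D ^ (-(2*c))) * (t ^ (1-c) * (M ^ c * D ^ (2*c))) = 1 := by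
    calc (t ^ (c-1) * M ^ (-c) * D ^ (-(2*c))) * (t ^ (1-c) * (M ^ c * D ^ (2*c)))
        = (t ^ (c-1) * t ^ (1-c)) * ((M ^ (-c) * M ^ c) * (D ^ (-(2*c)) * D ^ (2*c))) := by ring
      _ = 1 := by rw [a1, a2, a3]; norm_num
  have hA : (0:ℝ) < t ^ (c-1) * M ^ (-c) * D ^ (-(2*c)) := by positivity
  nlinarith [mul_le_mul_of_nonneg_left hR hA.le, key]

open Finset

lemma card_fiber_le {b : ℕ} (hb : 2 ≤ b) {d : ℕ} (hd1 : 1 ≤ d) (v : Finset ℕ)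
    (hv : ∀ ℓ ∈ v, ℓ.Prime ∧ ℓ ∣ b ^ d - 1) : v.card ≤ b * d := by
  have hprod : ∏ ℓ ∈ v, ℓ ∣ b ^ d - 1 :=
    Finset.prod_primes_dvd _ (fun p hp => (hv p hp).1.prime) (fun p hp => (hv p hp).2)
  have hbd : 2 ≤ b ^ d := le_trans hb (Nat.le_self_pow (by omega) b)
  have hNpos : 0 < b ^ d - 1 := by omega
  have hle : ∏ ℓ ∈ v, ℓ ≤ b ^ d - 1 := Nat.le_of_dvd hNpos hprod
  have h2 : 2 ^ v.card ≤ ∏ ℓ ∈ v, ℓ := by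
    rw [← Finset.prod_const]
    exact Finset.prod_le_prod' (fun p hp => (hv p hp).1.two_le)
  have hbd2 : b ^ d ≤ 2 ^ (b * d) := by
    calc b ^ d ≤ (2 ^ b) ^ d := Nat.pow_le_pow_left (Nat.lt_two_pow_self (n := b)).le d
      _ = 2 ^ (b * d) := by rw [← pow_mul]
  have : 2 ^ v.card < 2 ^ (b * d) := by omega
  exact (Nat.pow_lt_pow_iff_right one_lt_two).mp this |>.le

open Finset

lemma fiber_bound {b : ℕ} (hb : 2 ≤ b) {t : ℝ} (ht : 0 < t) {d : ℕ} (hd1 : 1 ≤ d)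
    {c : ℝ} (hc : 0 < c) (hc1 : c < 1) (v : Finset ℕ)
    (hv : ∀ ℓ ∈ v, ℓ.Prime ∧ ¬ℓ ∣ b ∧ orderOf ((b : ZMod ℓ)) = d ∧ t ≤ (ℓ:ℝ) * (d:ℝ)) :
    ∑ ℓ ∈ v, 1/((ℓ:ℝ)*(d:ℝ))
      ≤ (1/(1-c)) * (b:ℝ)^(1-c) * t^(c-1) * (d:ℝ)^(1-3*c) := by
  have hD1 : (1:ℝ) ≤ (d:ℝ) := by exact_mod_cast hd1
  set g : ℕ → ℕ := fun ℓ => (ℓ - 1) / d with hg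
  -- basic facts about elements of v
  have hfacts : ∀ ℓ ∈ v, ℓ = g ℓ * d + 1 ∧ 1 ≤ g ℓ := by
    intro ℓ hℓ
    obtain ⟨hp, hnd, hord, hts⟩ := hv ℓ hℓ
    have hdvd : d ∣ ℓ - 1 := hord ▸ ord_dvd_sub_one hp hnd
    have h2ℓ : 2 ≤ ℓ := hp.two_le
    obtain ⟨m, hm⟩ := hdvd
    have hgm : g ℓ = m := by
      rw [hg]; simp only; rw [hm, Nat.mul_div_cancel_left _ (by omega)]
    constructor
    · rw [hgm, mul_comm]; omega
    · rw [hgm]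
      rcases Nat.eq_zero_or_pos m with rfl | h
      · rw [mul_zero] at hm; omega
      · omega
  -- pointwise bound
  have hpt : ∀ ℓ ∈ v, 1/((ℓ:ℝ)*(d:ℝ))
      ≤ t^(c-1) * ((d:ℝ))^(-(2*c)) * ((g ℓ : ℕ):ℝ)^(-c) := by
    intro ℓ hℓ
    obtain ⟨hp, hnd, hord, hts⟩ := hv ℓ hℓ
    obtain ⟨he, hm1⟩ := hfacts ℓ hℓ
    have hM1 : (1:ℝ) ≤ ((g ℓ : ℕ):ℝ) := by exact_mod_cast hm1
    have h2 : ((g ℓ : ℕ):ℝ) * (d:ℝ) ≤ (ℓ:ℝ) := by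
      have : (g ℓ * d : ℕ) ≤ ℓ := by omega
      exact_mod_cast this
    have := point_bound ht hM1 hD1 hts h2 hc hc1.le
    calc 1/((ℓ:ℝ)*(d:ℝ)) ≤ t^(c-1) * ((g ℓ:ℕ):ℝ)^(-c) * ((d:ℝ))^(-(2*c)) := this
      _ = t^(c-1) * ((d:ℝ))^(-(2*c)) * ((g ℓ:ℕ):ℝ)^(-c) := by ring
  have hsum1 : ∑ ℓ ∈ v, 1/((ℓ:ℝ)*(d:ℝ))
      ≤ t^(c-1) * ((d:ℝ))^(-(2*c)) * ∑ ℓ ∈ v, ((g ℓ : ℕ):ℝ)^(-c) := by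
    rw [Finset.mul_sum]
    exact Finset.sum_le_sum hpt
  -- injectivity
  have hinj : ∀ x ∈ v, ∀ y ∈ v, g x = g y → x = y := by
    intro x hx y hy hxy
    have ex := (hfacts x hx).1
    have ey := (hfacts y hy).1
    rw [hxy] at ex
    omega
  have himg : ∑ ℓ ∈ v, ((g ℓ : ℕ):ℝ)^(-c) = ∑ m ∈ v.image g, ((m:ℕ):ℝ)^(-c) :=
    (Finset.sum_image (f := fun m : ℕ => ((m:ℕ):ℝ)^(-c)) hinj).symm
  -- antitone comparison
  have hanti : ∀ i j : ℕ, 1 ≤ i → i ≤ j → ((j:ℕ):ℝ)^(-c) ≤ ((i:ℕ):ℝ)^(-c) := by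
    intro i j hi hij
    apply Real.rpow_le_rpow_of_nonpos (by exact_mod_cast hi) (by exact_mod_cast hij)
    linarith
  have hS1 : ∀ m ∈ v.image g, 1 ≤ m := by
    intro m hm
    obtain ⟨ℓ, hℓ, rfl⟩ := Finset.mem_image.mp hm
    exact (hfacts ℓ hℓ).2
  have h5 := sum_distinct_le (fun i : ℕ => ((i:ℕ):ℝ)^(-c)) hanti (v.image g) hS1
  have hc' : 0 < 1 - c := by linarith
  have hc'1 : 1 - c ≤ 1 := by linarith
  have h6 : ∑ i ∈ Icc 1 (v.image g).card, ((i:ℕ):ℝ)^(-c)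
      ≤ (1/(1-c)) * (((v.image g).card : ℕ):ℝ)^(1-c) := by
    have := sum_Icc_rpow_le hc' hc'1 (v.image g).card
    have e : ∀ i : ℕ, ((i:ℕ):ℝ)^(-c) = ((i:ℕ):ℝ)^((1-c)-1) := by
      intro i; norm_num
    calc ∑ i ∈ Icc 1 (v.image g).card, ((i:ℕ):ℝ)^(-c)
        = ∑ i ∈ Icc 1 (v.image g).card, ((i:ℕ):ℝ)^((1-c)-1) :=
          Finset.sum_congr rfl (fun i _ => e i)
      _ ≤ (1/(1-c)) * (((v.image g).card : ℕ):ℝ)^(1-c) := this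
  have hcard : (v.image g).card = v.card := Finset.card_image_of_injOn hinj
  have hcardle : v.card ≤ b * d := by
    apply card_fiber_le hb hd1
    intro ℓ hℓ
    obtain ⟨hp, hnd, hord, _⟩ := hv ℓ hℓ
    exact ⟨hp, hord ▸ dvd_pow_ord_sub_one hb hp hnd⟩
  have h7 : (((v.image g).card : ℕ):ℝ)^(1-c) ≤ ((b:ℝ)*(d:ℝ))^(1-c) := by
    apply Real.rpow_le_rpow (by positivity) _ hc'.le
    rw [hcard]
    calc ((v.card : ℕ):ℝ) ≤ ((b*d : ℕ):ℝ) := by exact_mod_cast hcardle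
      _ = (b:ℝ)*(d:ℝ) := by push_cast; ring
  have h8 : ((b:ℝ)*(d:ℝ))^(1-c) = (b:ℝ)^(1-c) * (d:ℝ)^(1-c) :=
    Real.mul_rpow (by positivity) (by positivity)
  have hmul_nonneg : (0:ℝ) ≤ t^(c-1) * ((d:ℝ))^(-(2*c)) := by positivity
  have hfinal : ∑ ℓ ∈ v, ((g ℓ : ℕ):ℝ)^(-c) ≤ (1/(1-c)) * (b:ℝ)^(1-c) * (d:ℝ)^(1-c) := by
    rw [himg]
    refine h5.trans (h6.trans ?_)
    calc (1/(1-c)) * (((v.image g).card : ℕ):ℝ)^(1-c)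
        ≤ (1/(1-c)) * ((b:ℝ)*(d:ℝ))^(1-c) := by
          apply mul_le_mul_of_nonneg_left h7 (by positivity)
      _ = (1/(1-c)) * (b:ℝ)^(1-c) * (d:ℝ)^(1-c) := by rw [h8, ← mul_assoc]
  have hd0 : (0:ℝ) < (d:ℝ) := by linarith
  have hdexp : ((d:ℝ))^(-(2*c)) * (d:ℝ)^(1-c) = (d:ℝ)^(1-3*c) := by
    rw [← Real.rpow_add hd0]
    ring_nf
  calc ∑ ℓ ∈ v, 1/((ℓ:ℝ)*(d:ℝ))
      ≤ t^(c-1) * ((d:ℝ))^(-(2*c)) * ∑ ℓ ∈ v, ((g ℓ : ℕ):ℝ)^(-c) := hsum1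
    _ ≤ t^(c-1) * ((d:ℝ))^(-(2*c)) * ((1/(1-c)) * (b:ℝ)^(1-c) * (d:ℝ)^(1-c)) :=
        mul_le_mul_of_nonneg_left hfinal hmul_nonneg
    _ = (1/(1-c)) * (b:ℝ)^(1-c) * t^(c-1) * (((d:ℝ))^(-(2*c)) * (d:ℝ)^(1-c)) := by ring
    _ = (1/(1-c)) * (b:ℝ)^(1-c) * t^(c-1) * (d:ℝ)^(1-3*c) := by rw [hdexp]

open Finset

lemma main_finsum {b : ℕ} (hb : 2 ≤ b) {t : ℝ} (ht : 1 ≤ t) (u : Finset ℕ)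
    (hu : ∀ ℓ ∈ u, ℓ.Prime ∧ ¬ℓ ∣ b ∧ t ≤ (ℓ:ℝ) * ((orderOf ((b : ZMod ℓ)) : ℕ):ℝ)) :
    ∑ ℓ ∈ u, 1/((ℓ:ℝ) * ((orderOf ((b : ZMod ℓ)) : ℕ):ℝ)) ≤ (100*(b:ℝ)) * t^(-(1/3:ℝ)) := by
  have ht0 : (0:ℝ) < t := by linarith
  set D : ℕ → ℕ := fun ℓ => orderOf ((b : ZMod ℓ)) with hD
  set F : ℕ → ℝ := fun ℓ => 1/((ℓ:ℝ) * ((D ℓ : ℕ):ℝ)) with hF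
  set E : Finset ℕ := u.image D with hE
  have hfib : ∑ d ∈ E, ∑ ℓ ∈ u.filter (fun ℓ => D ℓ = d), F ℓ = ∑ ℓ ∈ u, F ℓ :=
    Finset.sum_fiberwise_of_maps_to (fun x hx => Finset.mem_image_of_mem D hx) F
  rw [← hfib]
  -- fiber bounds
  have hfiber : ∀ d ∈ E, ∀ c : ℝ, 0 < c → c < 1 →
      ∑ ℓ ∈ u.filter (fun ℓ => D ℓ = d), F ℓ
        ≤ (1/(1-c)) * (b:ℝ)^(1-c) * t^(c-1) * (d:ℝ)^(1-3*c) := by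
    intro d hd c hc hc1
    obtain ⟨ℓ₀, hℓ₀, hdℓ₀⟩ := Finset.mem_image.mp hd
    have hd1 : 1 ≤ d := hdℓ₀ ▸ ord_pos (hu ℓ₀ hℓ₀).1 (hu ℓ₀ hℓ₀).2.1
    have he : ∑ ℓ ∈ u.filter (fun ℓ => D ℓ = d), F ℓ
        = ∑ ℓ ∈ u.filter (fun ℓ => D ℓ = d), 1/((ℓ:ℝ)*(d:ℝ)) := by
      apply Finset.sum_congr rfl
      intro ℓ hℓ
      have : D ℓ = d := (Finset.mem_filter.mp hℓ).2
      rw [hF]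
      simp only
      rw [this]
    rw [he]
    apply fiber_bound hb ht0 hd1 hc hc1
    intro ℓ hℓ
    obtain ⟨hℓu, hDd⟩ := Finset.mem_filter.mp hℓ
    obtain ⟨hp, hnd, hts⟩ := hu ℓ hℓu
    refine ⟨hp, hnd, hDd, ?_⟩
    rw [← hDd]
    exact hts
  -- split E
  set x := t ^ (1/3 : ℝ) with hx
  have hx1 : (1:ℝ) ≤ x := Real.one_le_rpow ht (by norm_num)
  have hx0 : (0:ℝ) < x := by linarith
  set E₁ := E.filter (fun d : ℕ => (d:ℝ) ≤ x) with hE₁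
  set E₂ := E.filter (fun d : ℕ => ¬((d:ℝ) ≤ x)) with hE₂
  have hsplit : ∑ d ∈ E, ∑ ℓ ∈ u.filter (fun ℓ => D ℓ = d), F ℓ
      = ∑ d ∈ E₁, ∑ ℓ ∈ u.filter (fun ℓ => D ℓ = d), F ℓ
      + ∑ d ∈ E₂, ∑ ℓ ∈ u.filter (fun ℓ => D ℓ = d), F ℓ :=
    (Finset.sum_filter_add_sum_filter_not E _ _).symm
  rw [hsplit]
  -- Part 1
  have hpart1 : ∑ d ∈ E₁, ∑ ℓ ∈ u.filter (fun ℓ => D ℓ = d), F ℓ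
      ≤ (3/2) * (b:ℝ)^(2/3:ℝ) * t^(-(2/3):ℝ) * x := by
    have hbd : ∀ d ∈ E₁, ∑ ℓ ∈ u.filter (fun ℓ => D ℓ = d), F ℓ
        ≤ (3/2) * (b:ℝ)^(2/3:ℝ) * t^(-(2/3):ℝ) := by
      intro d hd
      have hdE : d ∈ E := (Finset.mem_filter.mp hd).1
      have := hfiber d hdE (1/3) (by norm_num) (by norm_num)
      have hd1 : 1 ≤ d := by
        obtain ⟨ℓ₀, hℓ₀, hdℓ₀⟩ := Finset.mem_image.mp hdE
        exact hdℓ₀ ▸ ord_pos (hu ℓ₀ hℓ₀).1 (hu ℓ₀ hℓ₀).2.1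
      have e0 : ((d:ℝ))^(1-3*(1/3:ℝ)) = 1 := by
        norm_num
      rw [e0] at this
      calc ∑ ℓ ∈ u.filter (fun ℓ => D ℓ = d), F ℓ
          ≤ (1/(1-(1/3:ℝ))) * (b:ℝ)^(1-(1/3:ℝ)) * t^((1/3:ℝ)-1) * 1 := this
        _ = (3/2) * (b:ℝ)^(2/3:ℝ) * t^(-(2/3):ℝ) := by norm_num
    calc ∑ d ∈ E₁, ∑ ℓ ∈ u.filter (fun ℓ => D ℓ = d), F ℓ
        ≤ ∑ _d ∈ E₁, (3/2) * (b:ℝ)^(2/3:ℝ) * t^(-(2/3):ℝ) := Finset.sum_le_sum hbd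
      _ = E₁.card * ((3/2) * (b:ℝ)^(2/3:ℝ) * t^(-(2/3):ℝ)) := by
          rw [Finset.sum_const, nsmul_eq_mul]
      _ ≤ x * ((3/2) * (b:ℝ)^(2/3:ℝ) * t^(-(2/3):ℝ)) := by
          apply mul_le_mul_of_nonneg_right _ (by positivity)
          -- card E₁ ≤ x
          have hsub : E₁ ⊆ Icc 1 ⌊x⌋₊ := by
            intro d hd
            obtain ⟨hdE, hdx⟩ := Finset.mem_filter.mp hd
            have hd1 : 1 ≤ d := by
              obtain ⟨ℓ₀, hℓ₀, hdℓ₀⟩ := Finset.mem_image.mp hdE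
              exact hdℓ₀ ▸ ord_pos (hu ℓ₀ hℓ₀).1 (hu ℓ₀ hℓ₀).2.1
            exact Finset.mem_Icc.mpr ⟨hd1, Nat.le_floor hdx⟩
          calc (E₁.card : ℝ) ≤ ((Icc 1 ⌊x⌋₊).card : ℝ) := by
                exact_mod_cast Finset.card_le_card hsub
            _ = (⌊x⌋₊ : ℝ) := by rw [Nat.card_Icc]; simp
            _ ≤ x := Nat.floor_le hx0.le
      _ = (3/2) * (b:ℝ)^(2/3:ℝ) * t^(-(2/3):ℝ) * x := by ring
  -- Part 2
  have hpart2 : ∑ d ∈ E₂, ∑ ℓ ∈ u.filter (fun ℓ => D ℓ = d), F ℓ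
      ≤ 6 * (b:ℝ)^(1/6:ℝ) * t^(-(1/6):ℝ) * (4 * t^(-(1/6):ℝ)) := by
    have hbd : ∀ d ∈ E₂, ∑ ℓ ∈ u.filter (fun ℓ => D ℓ = d), F ℓ
        ≤ 6 * (b:ℝ)^(1/6:ℝ) * t^(-(1/6):ℝ) * ((d:ℝ))^(-(1+(1/2:ℝ))) := by
      intro d hd
      have hdE : d ∈ E := (Finset.mem_filter.mp hd).1
      have := hfiber d hdE (5/6) (by norm_num) (by norm_num)
      calc ∑ ℓ ∈ u.filter (fun ℓ => D ℓ = d), F ℓ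
          ≤ (1/(1-(5/6:ℝ))) * (b:ℝ)^(1-(5/6:ℝ)) * t^((5/6:ℝ)-1) * (d:ℝ)^(1-3*(5/6:ℝ)) := this
        _ = 6 * (b:ℝ)^(1/6:ℝ) * t^(-(1/6):ℝ) * ((d:ℝ))^(-(1+(1/2:ℝ))) := by norm_num
    have hsum2 : ∑ d ∈ E₂, ((d:ℝ))^(-(1+(1/2:ℝ))) ≤ 4 * t^(-(1/6):ℝ) := by
      set n := ⌊x⌋₊ + 1 with hn
      have hfl1 : 1 ≤ ⌊x⌋₊ := Nat.le_floor (by exact_mod_cast hx1)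
      have hn2 : 2 ≤ n := by omega
      have hsub : E₂ ⊆ Icc n (E₂.sup id) := by
        intro d hd
        obtain ⟨hdE, hdx⟩ := Finset.mem_filter.mp hd
        push_neg at hdx
        refine Finset.mem_Icc.mpr ⟨?_, Finset.le_sup (f := id) hd⟩
        have : ⌊x⌋₊ < d := (Nat.floor_lt hx0.le).mpr hdx
        omega
      have h1 : ∑ d ∈ E₂, ((d:ℝ))^(-(1+(1/2:ℝ)))
          ≤ ∑ d ∈ Icc n (E₂.sup id), ((d:ℝ))^(-(1+(1/2:ℝ))) :=
        Finset.sum_le_sum_of_subset_of_nonneg hsub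
          (fun i _ _ => Real.rpow_nonneg (by positivity) _)
      have h2 := sum_Icc_tail_rpow_le (γ := 1/2) (by norm_num) (by norm_num) (E₂.sup id) hn2
      have hnc : ((n:ℕ):ℝ) - 1 = (⌊x⌋₊ : ℝ) := by
        rw [hn]; push_cast; ring
      rw [hnc] at h2
      have hfl_half : x/2 ≤ (⌊x⌋₊ : ℝ) := by
        rcases le_or_gt 2 x with h | h
        · have := Nat.sub_one_lt_floor x
          linarith
        · have : (1:ℝ) ≤ (⌊x⌋₊ : ℝ) := by exact_mod_cast hfl1
          linarith
      have hhalfpos : (0:ℝ) < x/2 := by linarith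
      have h3 : ((⌊x⌋₊ : ℝ))^(-(1/2:ℝ)) ≤ (x/2)^(-(1/2:ℝ)) :=
        Real.rpow_le_rpow_of_nonpos hhalfpos hfl_half (by norm_num)
      have h4 : (x/2 : ℝ)^(-(1/2:ℝ)) = (2:ℝ)^(1/2:ℝ) * x^(-(1/2:ℝ)) := by
        rw [div_eq_mul_inv, Real.mul_rpow hx0.le (by positivity),
          Real.inv_rpow (by norm_num), ← Real.rpow_neg (by norm_num)]
        ring
      have h5 : (2:ℝ)^(1/2:ℝ) ≤ 2 := by
        calc (2:ℝ)^(1/2:ℝ) ≤ (2:ℝ)^(1:ℝ) :=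
          Real.rpow_le_rpow_of_exponent_le (by norm_num) (by norm_num)
          _ = 2 := Real.rpow_one 2
      have h6 : x^(-(1/2:ℝ)) = t^(-(1/6):ℝ) := by
        rw [hx, ← Real.rpow_mul ht0.le]
        norm_num
      have hxm : (0:ℝ) ≤ x^(-(1/2:ℝ)) := Real.rpow_nonneg hx0.le _
      calc ∑ d ∈ E₂, ((d:ℝ))^(-(1+(1/2:ℝ)))
          ≤ ∑ d ∈ Icc n (E₂.sup id), ((d:ℝ))^(-(1+(1/2:ℝ))) := h1
        _ ≤ (1/(1/2:ℝ)) * ((⌊x⌋₊ : ℝ))^(-(1/2:ℝ)) := h2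
        _ ≤ 2 * ((2:ℝ)^(1/2:ℝ) * x^(-(1/2:ℝ))) := by
            rw [h4] at h3
            have : (1/(1/2:ℝ)) = 2 := by norm_num
            rw [this]
            linarith [mul_le_mul_of_nonneg_left h3 (by norm_num : (0:ℝ) ≤ 2)]
        _ ≤ 2 * (2 * x^(-(1/2:ℝ))) := by
            apply mul_le_mul_of_nonneg_left _ (by norm_num)
            exact mul_le_mul_of_nonneg_right h5 hxm
        _ = 4 * x^(-(1/2:ℝ)) := by ring
        _ = 4 * t^(-(1/6):ℝ) := by rw [h6]
    calc ∑ d ∈ E₂, ∑ ℓ ∈ u.filter (fun ℓ => D ℓ = d), F ℓ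
        ≤ ∑ d ∈ E₂, 6 * (b:ℝ)^(1/6:ℝ) * t^(-(1/6):ℝ) * ((d:ℝ))^(-(1+(1/2:ℝ))) :=
          Finset.sum_le_sum hbd
      _ = 6 * (b:ℝ)^(1/6:ℝ) * t^(-(1/6):ℝ) * ∑ d ∈ E₂, ((d:ℝ))^(-(1+(1/2:ℝ))) := by
          rw [Finset.mul_sum]
      _ ≤ 6 * (b:ℝ)^(1/6:ℝ) * t^(-(1/6):ℝ) * (4 * t^(-(1/6):ℝ)) := by
          apply mul_le_mul_of_nonneg_left hsum2 (by positivity)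
  -- combine
  have hb1 : (1:ℝ) ≤ (b:ℝ) := by exact_mod_cast (by omega : 1 ≤ b)
  have hbpow1 : (b:ℝ)^(2/3:ℝ) ≤ (b:ℝ) := by
    calc (b:ℝ)^(2/3:ℝ) ≤ (b:ℝ)^(1:ℝ) :=
        Real.rpow_le_rpow_of_exponent_le hb1 (by norm_num)
      _ = (b:ℝ) := Real.rpow_one _
  have hbpow2 : (b:ℝ)^(1/6:ℝ) ≤ (b:ℝ) := by
    calc (b:ℝ)^(1/6:ℝ) ≤ (b:ℝ)^(1:ℝ) :=
        Real.rpow_le_rpow_of_exponent_le hb1 (by norm_num)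
      _ = (b:ℝ) := Real.rpow_one _
  have ht13 : (0:ℝ) < t^(-(1/3):ℝ) := Real.rpow_pos_of_pos ht0 _
  have e1 : t^(-(2/3):ℝ) * x = t^(-(1/3):ℝ) := by
    rw [hx, ← Real.rpow_add ht0]
    norm_num
  have e2 : t^(-(1/6):ℝ) * t^(-(1/6):ℝ) = t^(-(1/3):ℝ) := by
    rw [← Real.rpow_add ht0]
    norm_num
  have hfin1 : (3/2) * (b:ℝ)^(2/3:ℝ) * t^(-(2/3):ℝ) * x ≤ (3/2) * (b:ℝ) * t^(-(1/3):ℝ) := by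
    calc (3/2) * (b:ℝ)^(2/3:ℝ) * t^(-(2/3):ℝ) * x
        = (3/2) * (b:ℝ)^(2/3:ℝ) * (t^(-(2/3):ℝ) * x) := by ring
      _ = (3/2) * (b:ℝ)^(2/3:ℝ) * t^(-(1/3):ℝ) := by rw [e1]
      _ ≤ (3/2) * (b:ℝ) * t^(-(1/3):ℝ) := by
          have := mul_le_mul_of_nonneg_right hbpow1 ht13.le
          nlinarith
  have hfin2 : 6 * (b:ℝ)^(1/6:ℝ) * t^(-(1/6):ℝ) * (4 * t^(-(1/6):ℝ))
      ≤ 24 * (b:ℝ) * t^(-(1/3):ℝ) := by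
    calc 6 * (b:ℝ)^(1/6:ℝ) * t^(-(1/6):ℝ) * (4 * t^(-(1/6):ℝ))
        = 24 * (b:ℝ)^(1/6:ℝ) * (t^(-(1/6):ℝ) * t^(-(1/6):ℝ)) := by ring
      _ = 24 * (b:ℝ)^(1/6:ℝ) * t^(-(1/3):ℝ) := by rw [e2]
      _ ≤ 24 * (b:ℝ) * t^(-(1/3):ℝ) := by
          have := mul_le_mul_of_nonneg_right hbpow2 ht13.le
          nlinarith
  have hK : (3/2) * (b:ℝ) * t^(-(1/3):ℝ) + 24 * (b:ℝ) * t^(-(1/3):ℝ)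
      ≤ (100*(b:ℝ)) * t^(-(1/3):ℝ) := by
    nlinarith [ht13, hb1]
  have := add_le_add hpart1 hpart2
  have goal_exp : t^(-(1/3):ℝ) = t^(-(1/3:ℝ)) := by norm_num
  calc ∑ d ∈ E₁, ∑ ℓ ∈ u.filter (fun ℓ => D ℓ = d), F ℓ
      + ∑ d ∈ E₂, ∑ ℓ ∈ u.filter (fun ℓ => D ℓ = d), F ℓ
      ≤ (3/2) * (b:ℝ)^(2/3:ℝ) * t^(-(2/3):ℝ) * x
        + 6 * (b:ℝ)^(1/6:ℝ) * t^(-(1/6):ℝ) * (4 * t^(-(1/6):ℝ)) := this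
    _ ≤ (3/2) * (b:ℝ) * t^(-(1/3):ℝ) + 24 * (b:ℝ) * t^(-(1/3):ℝ) := add_le_add hfin1 hfin2
    _ ≤ (100*(b:ℝ)) * t^(-(1/3):ℝ) := hK
    _ = (100*(b:ℝ)) * t^(-(1/3:ℝ)) := by rw [goal_exp]

/-- For every integer `b ≥ 2` there exists `K > 0` (depending only on `b`) such that for all
real `t ≥ 1`, the sum `∑ 1/(ℓ·ord_ℓ(b))` over primes `ℓ` with `ℓ ∤ b` and `ℓ·ord_ℓ(b) ≥ t`
is at most `K · t^(-1/3)`. -/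
theorem stmt1 (b : ℕ) (hb : 2 ≤ b) :
    ∃ K : ℝ, 0 < K ∧ ∀ t : ℝ, 1 ≤ t →
      Summable (fun ℓ : {ℓ : ℕ // ℓ.Prime ∧ ¬ℓ ∣ b ∧
          t ≤ ((ℓ : ℕ) : ℝ) * (orderOf ((b : ZMod (ℓ : ℕ))) : ℝ)} =>
        (1 : ℝ) / (((ℓ : ℕ) : ℝ) * (orderOf ((b : ZMod (ℓ : ℕ))) : ℝ))) ∧
      ∑' ℓ : {ℓ : ℕ // ℓ.Prime ∧ ¬ℓ ∣ b ∧
          t ≤ ((ℓ : ℕ) : ℝ) * (orderOf ((b : ZMod (ℓ : ℕ))) : ℝ)},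
        (1 : ℝ) / (((ℓ : ℕ) : ℝ) * (orderOf ((b : ZMod (ℓ : ℕ))) : ℝ))
      ≤ K * t ^ (-(1 / 3 : ℝ)) := by
  refine ⟨100 * (b:ℝ), ?_, ?_⟩
  · have : (0:ℝ) < (b:ℝ) := by exact_mod_cast (by omega : 0 < b)
    linarith
  · intro t ht
    set ι := {ℓ : ℕ // ℓ.Prime ∧ ¬ℓ ∣ b ∧
        t ≤ ((ℓ : ℕ) : ℝ) * (orderOf ((b : ZMod (ℓ : ℕ))) : ℝ)} with hι
    set f : ι → ℝ := fun ℓ =>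
      (1 : ℝ) / (((ℓ : ℕ) : ℝ) * (orderOf ((b : ZMod (ℓ : ℕ))) : ℝ)) with hf
    have hnn : 0 ≤ f := by
      intro ℓ
      rw [hf]
      positivity
    have hbound : ∀ s : Finset ι, ∑ ℓ ∈ s, f ℓ ≤ (100*(b:ℝ)) * t^(-(1/3:ℝ)) := by
      intro s
      set u : Finset ℕ := s.image (fun ℓ : ι => (ℓ : ℕ)) with hu_def
      have hinj : ∀ x ∈ s, ∀ y ∈ s, (x : ℕ) = (y : ℕ) → x = y := by
        intro x _ y _ h
        exact Subtype.ext h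
      have hsum : ∑ ℓ ∈ s, f ℓ
          = ∑ ℓ ∈ u, 1/((ℓ:ℝ) * ((orderOf ((b : ZMod ℓ)) : ℕ):ℝ)) := by
        rw [hu_def]
        rw [Finset.sum_image (f := fun ℓ : ℕ =>
          1/((ℓ:ℝ) * ((orderOf ((b : ZMod ℓ)) : ℕ):ℝ))) hinj]
      have hu : ∀ ℓ ∈ u, ℓ.Prime ∧ ¬ℓ ∣ b ∧
          t ≤ (ℓ:ℝ) * ((orderOf ((b : ZMod ℓ)) : ℕ):ℝ) := by
        intro ℓ hℓ
        obtain ⟨x, _, rfl⟩ := Finset.mem_image.mp hℓ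
        exact x.2
      rw [hsum]
      exact main_finsum hb ht u hu
    exact ⟨summable_of_sum_le hnn hbound,
      Summable.tsum_le_of_sum_le (summable_of_sum_le hnn hbound) hbound⟩
end

section
/- Fix an integer b ≥ 2 and a real number η with 0 < η < 1. There exists a constant K > 0 (depending only on b and η) such that for all real u ≥ 1, the sum ∑ 1/ord_ℓ(b), taken over all primes ℓ ≤ u with ℓ ∤ b and ord_ℓ(b) < ℓ^η, is at most K·u^η. -/
-- ω(n) ≤ log₂-type bound
lemma aux_omega_le (n : ℕ) (hn : n ≠ 0) : 2 ^ n.primeFactors.card ≤ n :=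
  calc 2 ^ n.primeFactors.card ≤ ∏ p ∈ n.primeFactors, p :=
        Finset.pow_card_le_prod _ _ _ (fun p hp => (Nat.prime_of_mem_primeFactors hp).two_le)
    _ ≤ n := Nat.le_of_dvd (Nat.pos_of_ne_zero hn) (Nat.prod_primeFactors_dvd n)

lemma aux_ord_pos (b ℓ : ℕ) (hb : 2 ≤ b) (hp : ℓ.Prime) (hd : ¬ℓ ∣ b) :
    0 < orderOf ((b : ZMod ℓ)) := by
  haveI : Fact ℓ.Prime := ⟨hp⟩
  have hne : (b : ZMod ℓ) ≠ 0 := by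
    rw [Ne, ZMod.natCast_eq_zero_iff]; exact hd
  have h1 : ((b : ZMod ℓ)) ^ (ℓ - 1) = 1 := ZMod.pow_card_sub_one_eq_one hne
  have : IsOfFinOrder ((b : ZMod ℓ)) :=
    isOfFinOrder_iff_pow_eq_one.mpr ⟨ℓ - 1, ⟨by have := hp.two_le; omega, h1⟩⟩
  exact orderOf_pos_iff.mpr this

lemma aux_dvd (b ℓ : ℕ) (hb : 2 ≤ b) (hp : ℓ.Prime) (hd : ¬ℓ ∣ b) :
    ℓ ∣ b ^ (orderOf ((b : ZMod ℓ))) - 1 := by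
  haveI : Fact ℓ.Prime := ⟨hp⟩
  set d := orderOf ((b : ZMod ℓ)) with hdd
  have h1 : ((b : ZMod ℓ)) ^ d = 1 := pow_orderOf_eq_one _
  have hb1 : 1 ≤ b ^ d := Nat.one_le_pow _ _ (by omega)
  rw [← ZMod.natCast_eq_zero_iff]
  push_cast [Nat.cast_sub hb1]
  rw [h1]; ring


/-- Fix an integer `b ≥ 2` and real `0 < η < 1`. There is `K > 0` (depending only on `b, η`)
such that for all real `u ≥ 1`, the sum `∑ 1/ord_ℓ(b)` over primes `ℓ ≤ u` with `ℓ ∤ b` and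
`ord_ℓ(b) < ℓ^η` is at most `K · u^η`. -/
theorem stmt3 (b : ℕ) (hb : 2 ≤ b) (η : ℝ) (hη0 : 0 < η) (hη1 : η < 1) :
    ∃ K : ℝ, 0 < K ∧ ∀ u : ℝ, 1 ≤ u →
      ∑' ℓ : {ℓ : ℕ // ℓ.Prime ∧ ¬ℓ ∣ b ∧ ((ℓ : ℕ) : ℝ) ≤ u ∧
          (orderOf ((b : ZMod (ℓ : ℕ))) : ℝ) < ((ℓ : ℕ) : ℝ) ^ η},
        (1 : ℝ) / (orderOf ((b : ZMod (ℓ : ℕ))) : ℝ)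
      ≤ K * u ^ η := by
  classical
  have hbR : (0 : ℝ) < b := by positivity
  refine ⟨b, hbR, ?_⟩
  intro u hu
  have huη : (0 : ℝ) ≤ u ^ η := Real.rpow_nonneg (by linarith) η
  set P : ℕ → Prop := fun ℓ => ℓ.Prime ∧ ¬ℓ ∣ b ∧ ((ℓ : ℕ) : ℝ) ≤ u ∧
      (orderOf ((b : ZMod ℓ)) : ℝ) < ((ℓ : ℕ) : ℝ) ^ η with hP
  set f : ℕ → ℝ := fun ℓ => (1 : ℝ) / (orderOf ((b : ZMod ℓ)) : ℝ) with hf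
  have hfin : {ℓ : ℕ | P ℓ}.Finite := by
    apply Set.Finite.subset (Set.finite_Iic (⌊u⌋₊))
    intro ℓ hℓ
    exact Nat.le_floor hℓ.2.2.1
  set F : Finset ℕ := hfin.toFinset with hF
  have hsum : ∑' ℓ : {ℓ : ℕ // P ℓ}, f ℓ = ∑ ℓ ∈ F, f ℓ := by
    show ∑' ℓ : ↥{ℓ : ℕ | P ℓ}, f ℓ = ∑ ℓ ∈ F, f ℓ
    rw [tsum_subtype {ℓ : ℕ | P ℓ} f, tsum_eq_sum (s := F)
      (fun ℓ hℓ => Set.indicator_of_notMem (by simpa [hF] using hℓ) f)]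
    exact Finset.sum_congr rfl fun ℓ hℓ =>
      Set.indicator_of_mem (hfin.mem_toFinset.mp hℓ) f
  rw [hsum]
  set D : ℕ := ⌊u ^ η⌋₊ with hD
  have hmaps : ∀ ℓ ∈ F, orderOf ((b : ZMod ℓ)) ∈ Finset.Icc 1 D := by
    intro ℓ hℓ
    obtain ⟨hp, hd, hlu, hord⟩ := hfin.mem_toFinset.mp hℓ
    rw [Finset.mem_Icc]
    refine ⟨aux_ord_pos b ℓ hb hp hd, Nat.le_floor ?_⟩
    have h2 : ((ℓ : ℕ) : ℝ) ^ η ≤ u ^ η :=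
      Real.rpow_le_rpow (by positivity) hlu (le_of_lt hη0)
    linarith
  rw [← Finset.sum_fiberwise_of_maps_to hmaps f]
  have hinner : ∀ d ∈ Finset.Icc 1 D,
      ∑ ℓ ∈ F.filter (fun ℓ => orderOf ((b : ZMod ℓ)) = d), f ℓ ≤ (b : ℝ) := by
    intro d hd
    obtain ⟨hd1, hdD⟩ := Finset.mem_Icc.mp hd
    have hconst : ∑ ℓ ∈ F.filter (fun ℓ => orderOf ((b : ZMod ℓ)) = d), f ℓ
        = (F.filter (fun ℓ => orderOf ((b : ZMod ℓ)) = d)).card * ((1 : ℝ) / d) := by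
      rw [Finset.sum_congr rfl (fun ℓ hℓ => ?_), Finset.sum_const, nsmul_eq_mul]
      rw [hf]
      simp only []
      rw [(Finset.mem_filter.mp hℓ).2]
    rw [hconst]
    have hN : b ^ d - 1 ≠ 0 := by
      have : 2 ≤ b ^ d := le_trans hb (Nat.le_self_pow (by omega) b)
      omega
    have hsub : F.filter (fun ℓ => orderOf ((b : ZMod ℓ)) = d) ⊆ (b ^ d - 1).primeFactors := by
      intro ℓ hℓ
      obtain ⟨hℓF, hord⟩ := Finset.mem_filter.mp hℓ
      obtain ⟨hp, hdvd, _, _⟩ := hfin.mem_toFinset.mp hℓF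
      refine Nat.mem_primeFactors.mpr ⟨hp, ?_, hN⟩
      have := aux_dvd b ℓ hb hp hdvd
      rwa [hord] at this
    have hcard : (F.filter (fun ℓ => orderOf ((b : ZMod ℓ)) = d)).card ≤ b * d := by
      refine le_trans (Finset.card_le_card hsub) ?_
      have h1 : 2 ^ (b ^ d - 1).primeFactors.card ≤ b ^ d - 1 := aux_omega_le _ hN
      have h2 : b ^ d ≤ 2 ^ (b * d) := by
        rw [pow_mul]
        exact Nat.pow_le_pow_left (le_of_lt (Nat.lt_two_pow_self (n := b))) d
      have h3 : 2 ^ (b ^ d - 1).primeFactors.card ≤ 2 ^ (b * d) := by omega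
      exact (Nat.pow_le_pow_iff_right (by norm_num)).mp h3
    have hdpos : (0 : ℝ) < d := by exact_mod_cast hd1
    calc ((F.filter (fun ℓ => orderOf ((b : ZMod ℓ)) = d)).card : ℝ) * ((1 : ℝ) / d)
        ≤ ((b * d : ℕ) : ℝ) * ((1 : ℝ) / d) := by
          apply mul_le_mul_of_nonneg_right (by exact_mod_cast hcard) (by positivity)
      _ = (b : ℝ) := by
          push_cast
          field_simp
  calc ∑ d ∈ Finset.Icc 1 D, ∑ ℓ ∈ F.filter (fun ℓ => orderOf ((b : ZMod ℓ)) = d), f ℓ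
      ≤ ∑ _d ∈ Finset.Icc 1 D, (b : ℝ) := Finset.sum_le_sum hinner
    _ = (D : ℝ) * b := by
        rw [Finset.sum_const, Nat.card_Icc, nsmul_eq_mul]
        push_cast
        ring_nf
    _ ≤ (b : ℝ) * u ^ η := by
        have : (D : ℝ) ≤ u ^ η := Nat.floor_le huη
        nlinarith
end

section
/- Fix an integer b ≥ 2 and a real number η with 0 < η < 1. There exists a constant K > 0 (depending only on b and η) such that for all real t ≥ 1, the sum ∑ 1/(ℓ·ord_ℓ(b)), taken over all primes ℓ ≥ t with ℓ ∤ b and ord_ℓ(b) < ℓ^η, is at most K·t^{−(1−η)}. -/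
open Finset

/-- Bernoulli-type inequality. -/
lemma aux_bern {q r : ℝ} (hq : 0 < q) (hr0 : 0 < r) (hr1 : r ≤ 1) :
    min q 1 * (1 - r) ≤ 1 - r ^ q := by
  rcases le_total q 1 with h | h
  · have h2 := Real.geom_mean_le_arith_mean2_weighted hq.le (by linarith : (0:ℝ) ≤ 1 - q)
      hr0.le zero_le_one (by ring)
    rw [Real.one_rpow, mul_one] at h2
    rw [min_eq_left h]
    nlinarith
  · rw [min_eq_right h]
    have h2 : r ^ q ≤ r ^ (1:ℝ) := Real.rpow_le_rpow_of_exponent_ge hr0 hr1 h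
    rw [Real.rpow_one] at h2
    nlinarith

/-- Telescoping step: `x^(-p) ≤ c * (x^(-(p-1)) - (x+1)^(-(p-1)))` for `x ≥ 1`, `p > 1`. -/
lemma aux_step {p x : ℝ} (hp : 1 < p) (hx : 1 ≤ x) :
    x ^ (-p) ≤ (2 / min (p - 1) 1) * (x ^ (-(p-1)) - (x+1) ^ (-(p-1))) := by
  set q := p - 1 with hqdef
  have hq : 0 < q := by simp only [hqdef]; linarith
  have hx0 : (0:ℝ) < x := by linarith
  have hx1 : (0:ℝ) < x + 1 := by linarith
  have hr0 : 0 < x / (x+1) := div_pos hx0 hx1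
  have hr1 : x / (x+1) ≤ 1 := by rw [div_le_one hx1]; linarith
  have key := aux_bern hq hr0 hr1
  have hxq : (0:ℝ) < x ^ q := Real.rpow_pos_of_pos hx0 _
  have hx1q : (0:ℝ) < (x+1) ^ q := Real.rpow_pos_of_pos hx1 _
  have hrq : (x / (x+1)) ^ q = x ^ q / (x+1) ^ q := Real.div_rpow hx0.le hx1.le q
  rw [hrq] at key
  have h1r : 1 - x / (x+1) = 1 / (x+1) := by field_simp; ring
  rw [h1r] at key
  have hm : 0 < min q 1 := lt_min hq one_pos
  have e1 : x ^ (-q) = 1 / x ^ q := by rw [Real.rpow_neg hx0.le, one_div]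
  have e2 : (x+1) ^ (-q) = 1 / (x+1) ^ q := by rw [Real.rpow_neg hx1.le, one_div]
  have e3 : x ^ (-p) = 1 / (x ^ q * x) := by
    rw [show -p = -q + (-1) by rw [hqdef]; ring, Real.rpow_add hx0, Real.rpow_neg_one,
      Real.rpow_neg hx0.le, one_div, mul_inv]
  rw [e1, e2, e3]
  have hx2 : x + 1 ≤ 2 * x := by linarith
  have hdiff : 0 ≤ (x+1)^q - x^q := by
    have : x ^ q ≤ (x+1)^q := Real.rpow_le_rpow hx0.le (by linarith) hq.le
    linarith
  have key2 : min q 1 * ((x+1)^q) ≤ ((x+1)^q - x^q) * (x+1) := by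
    calc min q 1 * ((x+1)^q) = min q 1 * (1/(x+1)) * ((x+1)*(x+1)^q) := by field_simp
    _ ≤ (1 - x^q/(x+1)^q) * ((x+1)*(x+1)^q) := by
        exact mul_le_mul_of_nonneg_right key (by positivity)
    _ = ((x+1)^q - x^q) * (x+1) := by field_simp
  have main : min q 1 * ((x+1)^q) ≤ 2*x*((x+1)^q - x^q) := by nlinarith
  have expand : (2/(min q 1)) * (1/x^q - 1/(x+1)^q) - 1/(x^q*x)
      = (2*x*((x+1)^q - x^q) - min q 1 * ((x+1)^q)) / (min q 1 * (x^q * x * (x+1)^q)) := by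
    field_simp
  have hfrac : 0 ≤ (2*x*((x+1)^q - x^q) - min q 1 * ((x+1)^q)) / (min q 1 * (x^q * x * (x+1)^q)) :=
    div_nonneg (by linarith) (by positivity)
  linarith [expand ▸ hfrac]
open Finset

lemma aux_tail {p : ℝ} (hp : 1 < p) (N : ℕ) (hN : 1 ≤ N) :
    Summable (fun d : ℕ => if N ≤ d then (d:ℝ) ^ (-p) else 0) ∧
    (∑' d : ℕ, if N ≤ d then (d:ℝ) ^ (-p) else 0) ≤ (2 / min (p-1) 1) * (N:ℝ) ^ (-(p-1)) := by
  set c : ℝ := 2 / min (p-1) 1 with hcdef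
  have hm : 0 < min (p-1) 1 := lt_min (by linarith) one_pos
  have hc : 0 < c := by rw [hcdef]; positivity
  set u : ℕ → ℝ := fun d => if N ≤ d then (d:ℝ) ^ (-p) else 0 with hudef
  set v : ℕ → ℝ := fun d => (d:ℝ) ^ (-(p-1)) with hvdef
  have hvnn : ∀ d, 0 ≤ v d := fun d => Real.rpow_nonneg (Nat.cast_nonneg d) _
  have hnonneg : ∀ d : ℕ, 0 ≤ u d := by
    intro d; rw [hudef]; dsimp only; split
    · exact Real.rpow_nonneg (Nat.cast_nonneg d) _
    · exact le_refl 0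
  have hle : ∀ d : ℕ, u d ≤ (d:ℝ) ^ (-p) := by
    intro d; rw [hudef]; dsimp only; split
    · exact le_refl _
    · exact Real.rpow_nonneg (Nat.cast_nonneg d) _
  have hsum : Summable (fun d : ℕ => (d:ℝ) ^ (-p)) :=
    Real.summable_nat_rpow.mpr (by linarith)
  have hS : Summable u := Summable.of_nonneg_of_le hnonneg hle hsum
  have step : ∀ d : ℕ, N ≤ d → u d ≤ c * (v d - v (d+1)) := by
    intro d hd
    have hd1 : (1:ℝ) ≤ (d:ℝ) := by exact_mod_cast hN.trans hd
    have h := aux_step hp hd1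
    rw [hudef, hvdef]; dsimp only
    rw [if_pos hd]
    convert h using 3
    push_cast; ring
  refine ⟨hS, Summable.tsum_le_of_sum_le hS ?_⟩
  intro s
  set M := s.sup id with hMdef
  have h1 : ∑ d ∈ s, u d ≤ ∑ d ∈ Ico N (M+1), u d := by
    have e : ∑ d ∈ s, u d = ∑ d ∈ s ∩ Ico N (M+1), u d := by
      refine (Finset.sum_subset Finset.inter_subset_left ?_).symm
      intro x hx hnx
      have hxM : x ≤ M := Finset.le_sup (f := id) hx
      have : x ∉ Ico N (M+1) := fun hmem => hnx (Finset.mem_inter.mpr ⟨hx, hmem⟩)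
      rw [Finset.mem_Ico] at this
      push_neg at this
      have hxN : ¬ N ≤ x := fun h => by omega
      rw [hudef]; dsimp only; rw [if_neg hxN]
    rw [e]
    exact Finset.sum_le_sum_of_subset_of_nonneg Finset.inter_subset_right
      (fun i _ _ => hnonneg i)
  have h2 : ∑ d ∈ Ico N (M+1), u d ≤ c * (v N - v (N + (M + 1 - N))) := by
    calc ∑ d ∈ Ico N (M+1), u d ≤ ∑ d ∈ Ico N (M+1), c * (v d - v (d+1)) := by
          refine Finset.sum_le_sum ?_
          intro d hd
          exact step d (Finset.mem_Ico.mp hd).1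
    _ = c * ∑ d ∈ Ico N (M+1), (v d - v (d+1)) := by rw [Finset.mul_sum]
    _ = c * (v N - v (N + (M + 1 - N))) := by
          rw [Finset.sum_Ico_eq_sum_range]
          have e : ∀ i, v (N + i) - v (N + i + 1) = (fun j => v (N + j)) i
              - (fun j => v (N + j)) (i + 1) := by
            intro i; simp only [add_assoc]
          rw [Finset.sum_congr rfl (fun i _ => e i), Finset.sum_range_sub', add_zero]
  have h3 : c * (v N - v (N + (M + 1 - N))) ≤ c * v N := by
    have := hvnn (N + (M + 1 - N))
    nlinarith
  calc ∑ d ∈ s, u d ≤ _ := h1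
  _ ≤ _ := h2
  _ ≤ c * v N := h3

lemma aux_card {b d : ℕ} (hb : 2 ≤ b) (hd : 1 ≤ d) :
    (b ^ d - 1).primeFactors.card ≤ d * (Nat.log 2 b + 1) := by
  have h2 : 2 ≤ b ^ d := le_trans hb (Nat.le_self_pow (by omega) b)
  have hn0 : b ^ d - 1 ≠ 0 := by omega
  have hpow : 2 ^ (b ^ d - 1).primeFactors.card ≤ b ^ d - 1 := by
    calc 2 ^ (b ^ d - 1).primeFactors.card ≤ ∏ p ∈ (b ^ d - 1).primeFactors, p :=
      Finset.pow_card_le_prod _ _ _ (fun p hp => (Nat.prime_of_mem_primeFactors hp).two_le)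
    _ ≤ b ^ d - 1 := Nat.le_of_dvd (by omega) (Nat.prod_primeFactors_dvd _)
  have hlog : (b ^ d - 1).primeFactors.card ≤ Nat.log 2 (b ^ d - 1) :=
    (Nat.le_log_iff_pow_le one_lt_two hn0).mpr hpow
  have hb2 : b < 2 ^ (Nat.log 2 b + 1) := Nat.lt_pow_succ_log_self one_lt_two b
  have hbd : b ^ d - 1 < 2 ^ (d * (Nat.log 2 b + 1)) := by
    have : b ^ d ≤ (2 ^ (Nat.log 2 b + 1)) ^ d := Nat.pow_le_pow_left (le_of_lt hb2) d
    rw [← Nat.pow_mul, Nat.mul_comm] at this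
    omega
  have := Nat.log_lt_of_lt_pow hn0 hbd
  omega

lemma aux_mem {b : ℕ} (hb : 2 ≤ b) {ℓ : ℕ} (hℓ : ℓ.Prime) (hndvd : ¬ ℓ ∣ b) :
    1 ≤ orderOf (b : ZMod ℓ) ∧ ℓ ∈ (b ^ orderOf (b : ZMod ℓ) - 1).primeFactors := by
  haveI : Fact ℓ.Prime := ⟨hℓ⟩
  have hne : (b : ZMod ℓ) ≠ 0 := by
    rwa [Ne, ZMod.natCast_eq_zero_iff]
  obtain ⟨u, hu⟩ := hne.isUnit
  have hpos : 0 < orderOf (b : ZMod ℓ) := by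
    rw [← hu, orderOf_units]
    exact orderOf_pos u
  set d := orderOf (b : ZMod ℓ) with hddef
  have hpow : (b : ZMod ℓ) ^ d = 1 := pow_orderOf_eq_one _
  have hcast : ((b ^ d : ℕ) : ZMod ℓ) = ((1 : ℕ) : ZMod ℓ) := by push_cast; simpa using hpow
  have hmod : b ^ d ≡ 1 [MOD ℓ] := (ZMod.natCast_eq_natCast_iff _ _ _).mp hcast
  have h2 : 2 ≤ b ^ d := le_trans hb (Nat.le_self_pow (by omega) b)
  have hdvd : ℓ ∣ b ^ d - 1 := (Nat.modEq_iff_dvd' (by omega)).mp hmod.symm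
  exact ⟨hpos, Nat.mem_primeFactors.mpr ⟨hℓ, hdvd, by omega⟩⟩

/-- Fix an integer `b ≥ 2` and real `0 < η < 1`. There is `K > 0` (depending only on `b, η`)
such that for all real `t ≥ 1`, the sum `∑ 1/(ℓ·ord_ℓ(b))` over primes `ℓ ≥ t` with `ℓ ∤ b`
and `ord_ℓ(b) < ℓ^η` is at most `K · t^(-(1-η))`. -/
theorem stmt4 (b : ℕ) (hb : 2 ≤ b) (η : ℝ) (hη0 : 0 < η) (hη1 : η < 1) :
    ∃ K : ℝ, 0 < K ∧ ∀ t : ℝ, 1 ≤ t →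
      Summable (fun ℓ : {ℓ : ℕ // ℓ.Prime ∧ ¬ℓ ∣ b ∧ t ≤ ((ℓ : ℕ) : ℝ) ∧
          (orderOf ((b : ZMod (ℓ : ℕ))) : ℝ) < ((ℓ : ℕ) : ℝ) ^ η} =>
        (1 : ℝ) / (((ℓ : ℕ) : ℝ) * (orderOf ((b : ZMod (ℓ : ℕ))) : ℝ))) ∧
      ∑' ℓ : {ℓ : ℕ // ℓ.Prime ∧ ¬ℓ ∣ b ∧ t ≤ ((ℓ : ℕ) : ℝ) ∧
          (orderOf ((b : ZMod (ℓ : ℕ))) : ℝ) < ((ℓ : ℕ) : ℝ) ^ η},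
        (1 : ℝ) / (((ℓ : ℕ) : ℝ) * (orderOf ((b : ZMod (ℓ : ℕ))) : ℝ))
      ≤ K * t ^ (-(1 - η)) := by
  classical
  set p : ℝ := 1 / η with hpdef
  have hp1 : 1 < p := by
    rw [hpdef, lt_div_iff₀ hη0, one_mul]; exact hη1
  set c : ℝ := 2 / min (p - 1) 1 with hcdef
  have hmin : 0 < min (p - 1) 1 := lt_min (by linarith) one_pos
  have hc : 0 < c := by rw [hcdef]; positivity
  set A : ℝ := ((Nat.log 2 b + 1 : ℕ) : ℝ) with hAdef
  have hA1 : (1 : ℝ) ≤ A := by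
    rw [hAdef]; exact_mod_cast Nat.succ_le_succ (Nat.zero_le _)
  have hA0 : (0 : ℝ) < A := lt_of_lt_of_le one_pos hA1
  refine ⟨A * (1 + c), by positivity, ?_⟩
  intro t ht
  have ht0 : (0 : ℝ) < t := by linarith
  have htη : (1 : ℝ) ≤ t ^ η := Real.one_le_rpow ht hη0.le
  have htη0 : (0 : ℝ) < t ^ η := by linarith
  set m : ℕ := ⌊t ^ η⌋₊ with hmdef
  have hm1 : 1 ≤ m := Nat.le_floor (by exact_mod_cast htη)
  set N : ℕ := m + 1 with hNdef
  have hNr : t ^ η ≤ (N : ℝ) := by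
    rw [hNdef]; push_cast; exact le_of_lt (Nat.lt_floor_add_one _)
  -- the bounding function on ℕ
  set gb : ℕ → ℝ := fun d => if d = 0 then 0 else 1 / ((d : ℝ) * max t ((d : ℝ) ^ p))
    with hgbdef
  have hgbnn : ∀ d, 0 ≤ gb d := by
    intro d
    rw [hgbdef]; dsimp only
    split
    · exact le_refl 0
    · next hd =>
      have hd0 : (0 : ℝ) < (d : ℝ) := by exact_mod_cast Nat.pos_of_ne_zero hd
      have hmax : (0 : ℝ) < max t ((d : ℝ) ^ p) := lt_of_lt_of_le ht0 (le_max_left _ _)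
      positivity
  -- the sigma type of pairs (d, prime factor of b^d - 1)
  set σT := Σ d : ℕ, {x : ℕ // x ∈ (b ^ d - 1).primeFactors} with hσT
  set G : σT → ℝ := fun x => gb x.1 with hGdef
  have hGnn : ∀ x, 0 ≤ G x := fun x => hgbnn x.1
  set Hd : ℕ → ℝ := fun d => ((b ^ d - 1).primeFactors.card : ℝ) * gb d with hHdef
  have fiber_tsum : ∀ d : ℕ, ∑' _x : {x : ℕ // x ∈ (b ^ d - 1).primeFactors}, gb d = Hd d := by
    intro d
    rw [tsum_const, Nat.card_eq_finsetCard, nsmul_eq_mul, hHdef]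
  have hHnn : ∀ d, 0 ≤ Hd d := fun d =>
    mul_nonneg (Nat.cast_nonneg _) (hgbnn d)
  -- bounding sequences
  set h1 : ℕ → ℝ := fun d => if d ∈ Finset.Icc 1 m then A / t else 0 with h1def
  set h2 : ℕ → ℝ := fun d => A * (if N ≤ d then (d : ℝ) ^ (-p) else 0) with h2def
  have h1nn : ∀ d, 0 ≤ h1 d := by
    intro d; rw [h1def]; dsimp only; split
    · positivity
    · exact le_refl 0
  have h2nn : ∀ d, 0 ≤ h2 d := by
    intro d; rw [h2def]; dsimp only; split
    · positivity
    · simp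
  have key : ∀ d : ℕ, Hd d ≤ h1 d + h2 d := by
    intro d
    rcases Nat.eq_zero_or_pos d with rfl | hd
    · have : Hd 0 = 0 := by rw [hHdef]; dsimp only; rw [hgbdef]; simp
      rw [this]
      exact add_nonneg (h1nn 0) (h2nn 0)
    · have hd0 : (0 : ℝ) < (d : ℝ) := by exact_mod_cast hd
      have hdp : (0 : ℝ) < (d : ℝ) ^ p := Real.rpow_pos_of_pos hd0 _
      have hmax : (0 : ℝ) < max t ((d : ℝ) ^ p) := lt_of_lt_of_le ht0 (le_max_left _ _)
      have hgb : gb d = 1 / ((d : ℝ) * max t ((d : ℝ) ^ p)) := by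
        rw [hgbdef]; dsimp only; rw [if_neg (Nat.pos_iff_ne_zero.mp hd)]
      have hcard : ((b ^ d - 1).primeFactors.card : ℝ) ≤ (d : ℝ) * A := by
        rw [hAdef]
        exact_mod_cast aux_card hb hd
      have hstep : Hd d ≤ A / max t ((d : ℝ) ^ p) := by
        rw [hHdef]; dsimp only
        calc ((b ^ d - 1).primeFactors.card : ℝ) * gb d
            ≤ ((d : ℝ) * A) * gb d := mul_le_mul_of_nonneg_right hcard (hgbnn d)
          _ = A / max t ((d : ℝ) ^ p) := by
              rw [hgb]; field_simp
      rcases le_or_gt d m with hdm | hdm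
      · have hh1 : h1 d = A / t := by
          rw [h1def]; dsimp only
          rw [if_pos (Finset.mem_Icc.mpr ⟨hd, hdm⟩)]
        have : A / max t ((d : ℝ) ^ p) ≤ A / t :=
          div_le_div_of_nonneg_left hA0.le ht0 (le_max_left _ _)
        have h2d := h2nn d
        rw [hh1]; linarith [hstep]
      · have hNd : N ≤ d := by omega
        have hh2 : h2 d = A * (d : ℝ) ^ (-p) := by
          rw [h2def]; dsimp only; rw [if_pos hNd]
        have : A / max t ((d : ℝ) ^ p) ≤ A * (d : ℝ) ^ (-p) := by
          rw [Real.rpow_neg hd0.le, ← div_eq_mul_inv]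
          exact div_le_div_of_nonneg_left hA0.le hdp (le_max_right _ _)
        have h1d : h1 d = 0 := by
          rw [h1def]; dsimp only
          rw [if_neg]
          rw [Finset.mem_Icc]
          push_neg
          intro _; omega
        rw [h1d, hh2]; linarith [hstep]
  -- summability and bounds for h1, h2
  have h1sum : Summable h1 := by
    apply summable_of_ne_finset_zero (s := Finset.Icc 1 m)
    intro d hd; rw [h1def]; dsimp only; rw [if_neg hd]
  have h1tsum : ∑' d, h1 d ≤ A * t ^ (-(1 - η)) := by
    have e : ∑' d, h1 d = (m : ℝ) * (A / t) := by
      have hv : ∀ d ∉ Finset.Icc 1 m, h1 d = 0 := by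
        intro d hd; rw [h1def]; dsimp only; rw [if_neg hd]
      rw [tsum_eq_sum (s := Finset.Icc 1 m) hv]
      have e2 : ∑ d ∈ Finset.Icc 1 m, h1 d = ∑ _d ∈ Finset.Icc 1 m, A / t :=
        Finset.sum_congr rfl (fun d hd => by rw [h1def]; dsimp only; rw [if_pos hd])
      rw [e2, Finset.sum_const, Nat.card_Icc, nsmul_eq_mul]
      norm_num
    rw [e]
    have hmle : (m : ℝ) ≤ t ^ η := Nat.floor_le htη0.le
    calc (m : ℝ) * (A / t) ≤ t ^ η * (A / t) :=
          mul_le_mul_of_nonneg_right hmle (by positivity)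
      _ = A * t ^ (-(1 - η)) := by
          rw [show -(1 - η) = η - 1 by ring, Real.rpow_sub ht0, Real.rpow_one]
          ring
  obtain ⟨husum, hutsum⟩ := aux_tail hp1 N (by omega)
  have h2sum : Summable h2 := husum.mul_left A
  have h2tsum : ∑' d, h2 d ≤ A * c * t ^ (-(1 - η)) := by
    rw [h2def, tsum_mul_left]
    have hNe : (N : ℝ) ^ (-(p - 1)) ≤ t ^ (-(1 - η)) := by
      have h1' : (N : ℝ) ^ (-(p - 1)) ≤ (t ^ η) ^ (-(p - 1)) :=
        Real.rpow_le_rpow_of_nonpos htη0 hNr (by linarith)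
      have h2' : (t ^ η) ^ (-(p - 1)) = t ^ (-(1 - η)) := by
        rw [← Real.rpow_mul ht0.le]
        congr 1
        rw [hpdef]
        field_simp
      exact le_of_le_of_eq h1' h2'
    calc A * ∑' d, (if N ≤ d then (d : ℝ) ^ (-p) else 0)
        ≤ A * (c * (N : ℝ) ^ (-(p - 1))) := by
          rw [hcdef] at *
          exact mul_le_mul_of_nonneg_left hutsum hA0.le
      _ ≤ A * (c * t ^ (-(1 - η))) := by
          have := mul_le_mul_of_nonneg_left hNe hc.le
          exact mul_le_mul_of_nonneg_left this hA0.le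
      _ = A * c * t ^ (-(1 - η)) := by ring
  have hHsum : Summable Hd := by
    apply Summable.of_nonneg_of_le hHnn key
    exact h1sum.add h2sum
  -- summability of G on the sigma type
  have hfibsum : ∀ d : ℕ, Summable (fun x : {x : ℕ // x ∈ (b ^ d - 1).primeFactors} => gb d) :=
    fun d => Summable.of_finite
  have hG : Summable G := by
    rw [hGdef]
    refine (summable_sigma_of_nonneg (fun x => hgbnn x.1)).mpr ⟨fun d => hfibsum d, ?_⟩
    have e : (fun d : ℕ => ∑' x : {x : ℕ // x ∈ (b ^ d - 1).primeFactors}, gb d) = Hd := by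
      funext d; exact fiber_tsum d
    rw [e]; exact hHsum
  have hGtsum : ∑' x : σT, G x ≤ A * (1 + c) * t ^ (-(1 - η)) := by
    have e : ∑' x : σT, G x = ∑' d, Hd d := by
      rw [Summable.tsum_sigma hG]
      exact tsum_congr fiber_tsum
    rw [e]
    calc ∑' d, Hd d ≤ ∑' d, (h1 d + h2 d) :=
          Summable.tsum_le_tsum key hHsum (h1sum.add h2sum)
      _ = (∑' d, h1 d) + ∑' d, h2 d := Summable.tsum_add h1sum h2sum
      _ ≤ A * t ^ (-(1 - η)) + A * c * t ^ (-(1 - η)) := add_le_add h1tsum h2tsum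
      _ = A * (1 + c) * t ^ (-(1 - η)) := by ring
  -- the injection from the index set into the sigma type
  set T := {ℓ : ℕ // ℓ.Prime ∧ ¬ℓ ∣ b ∧ t ≤ ((ℓ : ℕ) : ℝ) ∧
      (orderOf ((b : ZMod (ℓ : ℕ))) : ℝ) < ((ℓ : ℕ) : ℝ) ^ η} with hTdef
  set f : T → ℝ := fun ℓ =>
    (1 : ℝ) / (((ℓ : ℕ) : ℝ) * (orderOf ((b : ZMod (ℓ : ℕ))) : ℝ)) with hfdef
  have hfnn : ∀ ℓ : T, 0 ≤ f ℓ := by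
    intro ℓ; rw [hfdef]; dsimp only; positivity
  set Φ : T → σT := fun ℓ =>
    ⟨orderOf ((b : ZMod (ℓ : ℕ))), ⟨(ℓ : ℕ), (aux_mem hb ℓ.2.1 ℓ.2.2.1).2⟩⟩ with hΦdef
  have hΦinj : Function.Injective Φ := by
    intro a a' h
    have := congrArg (fun x : σT => (x.2 : ℕ)) h
    exact Subtype.ext this
  have hfle : ∀ ℓ : T, f ℓ ≤ G (Φ ℓ) := by
    rintro ⟨ℓ, hpr, hnd, hts, hord⟩
    set d : ℕ := orderOf ((b : ZMod ℓ)) with hddef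
    have hd1 : 1 ≤ d := (aux_mem hb hpr hnd).1
    have hd0 : (0 : ℝ) < (d : ℝ) := by exact_mod_cast hd1
    have hℓ0 : (0 : ℝ) < (ℓ : ℝ) := by
      have := hpr.two_le; exact_mod_cast by omega
    have hdpℓ : ((d : ℝ)) ^ p ≤ (ℓ : ℝ) := by
      have h1' : ((d : ℝ)) ^ p ≤ ((ℓ : ℝ) ^ η) ^ p :=
        Real.rpow_le_rpow hd0.le hord.le (by linarith)
      have h2' : ((ℓ : ℝ) ^ η) ^ p = (ℓ : ℝ) := by
        rw [← Real.rpow_mul hℓ0.le, hpdef, mul_one_div_cancel hη0.ne', Real.rpow_one]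
      linarith [h1'.trans_eq h2']
    have hmaxℓ : max t ((d : ℝ) ^ p) ≤ (ℓ : ℝ) := max_le hts hdpℓ
    have hmax0 : (0 : ℝ) < max t ((d : ℝ) ^ p) := lt_of_lt_of_le ht0 (le_max_left _ _)
    have hGval : G (Φ ⟨ℓ, hpr, hnd, hts, hord⟩) = 1 / ((d : ℝ) * max t ((d : ℝ) ^ p)) := by
      rw [hGdef, hΦdef]; dsimp only
      rw [hgbdef]; dsimp only
      rw [if_neg (by omega)]
    rw [hGval, hfdef]; dsimp only
    rw [← hddef]
    apply one_div_le_one_div_of_le (by positivity)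
    calc (d : ℝ) * max t ((d : ℝ) ^ p) ≤ (d : ℝ) * (ℓ : ℝ) :=
          mul_le_mul_of_nonneg_left hmaxℓ hd0.le
      _ = (ℓ : ℝ) * (d : ℝ) := mul_comm _ _
  have hGΦ : Summable (G ∘ Φ) := hG.comp_injective hΦinj
  have hf : Summable f := Summable.of_nonneg_of_le hfnn hfle hGΦ
  refine ⟨hf, ?_⟩
  calc ∑' ℓ : T, f ℓ ≤ ∑' x : σT, G x :=
        Summable.tsum_le_tsum_of_inj Φ hΦinj (fun x _ => hGnn x) hfle hf hG
    _ ≤ A * (1 + c) * t ^ (-(1 - η)) := hGtsum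
end

section
/- Let ℓ be a prime and r an integer. Then the cardinality of C_r(ℓ) equals ℓ(ℓ² − 2) if r ≡ 0 (mod ℓ), equals ℓ(ℓ² − ℓ − 1) if r ≡ 1 (mod ℓ), and equals ℓ(ℓ² − ℓ − 2) if r ≢ 0, 1 (mod ℓ). -/
open Matrix Finset


section counting
variable {F : Type} [Field F] [Fintype F] [DecidableEq F]

omit [Field F] in
lemma sum_ite_nev (x : F) (k : ℕ) :
    (∑ c : F, if c ≠ x then k else 0) = (Fintype.card F - 1) * k := by
  rw [← Finset.sum_filter, Finset.sum_const, Finset.filter_ne',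
    Finset.card_erase_of_mem (mem_univ x), card_univ, smul_eq_mul]

lemma L1 (m : F) :
    (∑ b : F, ∑ c : F, if b * c = m then 1 else 0) =
      if m = 0 then 2 * Fintype.card F - 1 else Fintype.card F - 1 := by
  have hq : 1 ≤ Fintype.card F := Fintype.card_pos
  rcases eq_or_ne m 0 with rfl | hm
  · rw [if_pos rfl]
    have step : ∀ b : F, (∑ c : F, if b * c = 0 then (1:ℕ) else 0) =
        if b = 0 then Fintype.card F else 1 := by
      intro b
      rcases eq_or_ne b 0 with rfl | hb
      · simp [Finset.card_univ]
      · have h2 : ∀ c : F, (b * c = 0) ↔ (c = 0) := fun c => by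
          simp [mul_eq_zero, hb]
        simp only [h2]
        simp [hb]
    rw [Finset.sum_congr rfl (fun b _ => step b)]
    rw [← Finset.add_sum_erase _ _ (mem_univ (0:F)), if_pos rfl]
    rw [Finset.sum_congr rfl (fun b hb => if_neg (Finset.ne_of_mem_erase hb))]
    rw [Finset.sum_const, Finset.card_erase_of_mem (mem_univ (0:F)), card_univ,
      smul_eq_mul, mul_one]
    omega
  · rw [if_neg hm]
    have step : ∀ b : F, (∑ c : F, if b * c = m then (1:ℕ) else 0) =
        if b = 0 then 0 else 1 := by
      intro b
      rcases eq_or_ne b 0 with rfl | hb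
      · simp [hm.symm]
      · have h2 : ∀ c : F, (b * c = m) ↔ (c = b⁻¹ * m) := fun c =>
          (eq_inv_mul_iff_mul_eq₀ hb).symm
        simp only [h2]
        simp [hb]
    rw [Finset.sum_congr rfl (fun b _ => step b)]
    rw [← Finset.add_sum_erase _ _ (mem_univ (0:F)), if_pos rfl]
    rw [Finset.sum_congr rfl (fun b hb => if_neg (Finset.ne_of_mem_erase hb))]
    rw [Finset.sum_const, Finset.card_erase_of_mem (mem_univ (0:F)), card_univ,
      smul_eq_mul, mul_one, zero_add]

lemma cardA (s : F) :
    (Finset.univ.filter fun p : F × F => p.1 * p.2 = s).card =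
      if s = 0 then 2 * Fintype.card F - 1 else Fintype.card F - 1 := by
  rw [Finset.card_filter, Fintype.sum_prod_type]
  exact L1 s

lemma setY (s : F) :
    (Finset.univ.filter fun p : F × F => p.1 * p.2 = s ∧ p.1 + p.2 = s + 1) =
      {((1:F), s), (s, 1)} := by
  ext ⟨a, d⟩
  simp only [Finset.mem_filter, Finset.mem_univ, true_and, Finset.mem_insert,
    Finset.mem_singleton, Prod.mk.injEq]
  constructor
  · rintro ⟨h1, h2⟩
    have hd : d = s + 1 - a := by linear_combination h2
    have hz : (a - 1) * (a - s) = 0 := by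
      rw [hd] at h1; linear_combination -h1
    rcases mul_eq_zero.mp hz with h | h
    · left
      have ha : a = 1 := by linear_combination h
      exact ⟨ha, by rw [hd, ha]; ring⟩
    · right
      have ha : a = s := by linear_combination h
      exact ⟨ha, by rw [hd, ha]; ring⟩
  · rintro (⟨rfl, rfl⟩ | ⟨rfl, rfl⟩) <;> constructor <;> ring

lemma cardY (s : F) :
    (Finset.univ.filter fun p : F × F => p.1 * p.2 = s ∧ p.1 + p.2 = s + 1).card =
      if s = 1 then 1 else 2 := by
  rw [setY]
  rcases eq_or_ne s 1 with rfl | hs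
  · simp
  · rw [if_neg hs]
    rw [Finset.card_insert_of_notMem, Finset.card_singleton]
    simp only [Finset.mem_singleton, Prod.mk.injEq, not_and]
    intro h; exact absurd h.symm hs

lemma cardX (s : F) :
    (Finset.univ.filter fun p : F × F => p.1 * p.2 = s ∧ p.1 + p.2 ≠ s + 1).card =
      (if s = 0 then 2 * Fintype.card F - 1 else Fintype.card F - 1) -
        (if s = 1 then 1 else 2) := by
  have key := Finset.card_filter_add_card_filter_not
    (s := Finset.univ.filter fun p : F × F => p.1 * p.2 = s)
    (p := fun p : F × F => p.1 + p.2 = s + 1)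
  rw [Finset.filter_filter, Finset.filter_filter] at key
  rw [cardA] at key
  have hY := cardY s
  have hX : (Finset.univ.filter fun p : F × F =>
      p.1 * p.2 = s ∧ p.1 + p.2 ≠ s + 1).card =
      (Finset.univ.filter fun p : F × F =>
        p.1 * p.2 = s ∧ ¬(p.1 + p.2 = s + 1)).card := rfl
  omega

lemma count_quad (s : F) :
    (Finset.univ.filter fun p : (F × F) × (F × F) =>
        p.1.1 * p.2.2 - p.1.2 * p.2.1 = s ∧ p.1.1 + p.2.2 ≠ s + 1).card =
      (Fintype.card F - 1) * (Fintype.card F - 1) * Fintype.card F +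
        Fintype.card F *
          ((if s = 0 then 2 * Fintype.card F - 1 else Fintype.card F - 1) -
            (if s = 1 then 1 else 2)) := by
  have hq : 1 ≤ Fintype.card F := Fintype.card_pos
  rw [Finset.card_filter]
  rw [Fintype.sum_prod_type]
  simp only [Fintype.sum_prod_type]
  have reorder : ∀ a : F, (∑ b : F, ∑ c : F, ∑ d : F,
      (if a * d - b * c = s ∧ a + d ≠ s + 1 then (1:ℕ) else 0)) =
      ∑ d : F, ∑ b : F, ∑ c : F,
      (if a * d - b * c = s ∧ a + d ≠ s + 1 then (1:ℕ) else 0) := by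
    intro a
    rw [Finset.sum_congr rfl fun b (_ : b ∈ Finset.univ) =>
      (Finset.sum_comm (s := Finset.univ) (t := Finset.univ)
        (f := fun c d => if a * d - b * c = s ∧ a + d ≠ s + 1 then (1:ℕ) else 0))]
    exact Finset.sum_comm
  rw [Finset.sum_congr rfl fun a _ => reorder a]
  have inner : ∀ a d : F, (∑ b : F, ∑ c : F,
      (if a * d - b * c = s ∧ a + d ≠ s + 1 then (1:ℕ) else 0)) =
      (if a + d ≠ s + 1 then Fintype.card F - 1 else 0) +
      (if a * d = s ∧ a + d ≠ s + 1 then Fintype.card F else 0) := by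
    intro a d
    by_cases hc : a + d = s + 1
    · simp [hc]
    · have hcond : ∀ b c : F, (a * d - b * c = s ∧ a + d ≠ s + 1) ↔
          (b * c = a * d - s) := by
        intro b c
        constructor
        · rintro ⟨h, -⟩; linear_combination -h
        · intro h; exact ⟨by linear_combination -h, hc⟩
      simp only [hcond]
      rw [L1]
      have : (a * d - s = 0) ↔ (a * d = s) := sub_eq_zero
      rw [if_congr this rfl rfl]
      rw [if_pos (show a + d ≠ s + 1 from hc)]
      by_cases hads : a * d = s
      · rw [if_pos hads, if_pos (show a * d = s ∧ a + d ≠ s + 1 from ⟨hads, hc⟩)]; omega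
      · rw [if_neg hads,
          if_neg (show ¬(a * d = s ∧ a + d ≠ s + 1) from fun h => hads h.1)]; omega
  rw [Finset.sum_congr rfl fun a _ => Finset.sum_congr rfl fun d _ => inner a d]
  simp only [Finset.sum_add_distrib]
  congr 1
  · have h1 : ∀ a : F, (∑ d : F, if a + d ≠ s + 1 then Fintype.card F - 1 else 0) =
        (Fintype.card F - 1) * (Fintype.card F - 1) := by
      intro a
      have hiff : ∀ d : F, (a + d ≠ s + 1) ↔ (d ≠ s + 1 - a) := by
        intro d
        constructor
        · intro h hd; exact h (by rw [hd]; ring)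
        · intro h hd; exact h (by linear_combination hd)
      simp only [hiff]
      exact sum_ite_nev _ _
    rw [Finset.sum_congr rfl fun a _ => h1 a, Finset.sum_const, card_univ, smul_eq_mul]
    ring
  · have e : (Finset.univ.filter fun p : F × F =>
        p.1 * p.2 = s ∧ p.1 + p.2 ≠ s + 1).card =
        ∑ x : F, ∑ y : F, (if x * y = s ∧ x + y ≠ s + 1 then (1:ℕ) else 0) := by
      rw [Finset.card_filter, Fintype.sum_prod_type]
    rw [← cardX s, e, Finset.mul_sum]
    exact Finset.sum_congr rfl fun x _ => by
      rw [Finset.mul_sum]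
      exact Finset.sum_congr rfl fun y _ => by split_ifs <;> simp

omit [Fintype F] [DecidableEq F] in
lemma det_one_sub (M : Matrix (Fin 2) (Fin 2) F) :
    (1 - M).det = M.det + 1 - M.trace := by
  simp [Matrix.det_fin_two, Matrix.trace_fin_two, Matrix.sub_apply, Matrix.one_apply]
  ring

omit [Fintype F] [DecidableEq F] in
lemma trace_one_sub (M : Matrix (Fin 2) (Fin 2) F) :
    (1 - M).trace = 2 - M.trace := by
  simp [Matrix.trace_fin_two, Matrix.sub_apply, Matrix.one_apply]

def matEquiv : ((F × F) × (F × F)) ≃ Matrix (Fin 2) (Fin 2) F where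
  toFun p := !![p.1.1, p.1.2; p.2.1, p.2.2]
  invFun M := ((M 0 0, M 0 1), (M 1 0, M 1 1))
  left_inv p := by simp
  right_inv M := (Matrix.eta_fin_two M).symm

noncomputable def glEquiv (s : F) :
    {g : GL (Fin 2) F // Matrix.det (g : Matrix (Fin 2) (Fin 2) F) + 1
        - Matrix.trace (g : Matrix (Fin 2) (Fin 2) F) = s} ≃
    {h : Matrix (Fin 2) (Fin 2) F // h.det = s ∧ h.trace ≠ s + 1} where
  toFun g := ⟨1 - (g.1 : Matrix (Fin 2) (Fin 2) F), by
    constructor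
    · rw [det_one_sub]; exact g.2
    · intro hT
      have hdet : Matrix.det (g.1 : Matrix (Fin 2) (Fin 2) F) ≠ 0 :=
        IsUnit.ne_zero ((Matrix.isUnit_iff_isUnit_det _).mp g.1.isUnit)
      apply hdet
      rw [trace_one_sub] at hT
      have := g.2
      linear_combination this - hT⟩
  invFun h := ⟨((Matrix.isUnit_iff_isUnit_det _).mpr (Ne.isUnit (by
      rw [det_one_sub]
      intro h0
      apply h.2.2
      have := h.2.1
      linear_combination -h0 + this))).unit, by
    show Matrix.det _ + 1 - Matrix.trace _ = s
    rw [IsUnit.unit_spec]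
    rw [det_one_sub, trace_one_sub]
    have h1 := h.2.1
    linear_combination h1⟩
  left_inv g := by
    apply Subtype.ext
    apply Units.ext
    show _ = (g.1 : Matrix (Fin 2) (Fin 2) F)
    rw [IsUnit.unit_spec]
    simp
  right_inv h := by
    apply Subtype.ext
    show (1 : Matrix (Fin 2) (Fin 2) F) - _ = h.1
    rw [IsUnit.unit_spec]
    simp

lemma card_main (s : F) :
    Nat.card {g : GL (Fin 2) F // Matrix.det (g : Matrix (Fin 2) (Fin 2) F) + 1
        - Matrix.trace (g : Matrix (Fin 2) (Fin 2) F) = s} =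
      (Fintype.card F - 1) * (Fintype.card F - 1) * Fintype.card F +
        Fintype.card F *
          ((if s = 0 then 2 * Fintype.card F - 1 else Fintype.card F - 1) -
            (if s = 1 then 1 else 2)) := by
  have e2 : {h : Matrix (Fin 2) (Fin 2) F // h.det = s ∧ h.trace ≠ s + 1} ≃
      {p : (F × F) × (F × F) //
        p.1.1 * p.2.2 - p.1.2 * p.2.1 = s ∧ p.1.1 + p.2.2 ≠ s + 1} :=
    (Equiv.subtypeEquiv (matEquiv) (fun p => by
      rw [show (matEquiv p : Matrix (Fin 2) (Fin 2) F).det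
          = p.1.1 * p.2.2 - p.1.2 * p.2.1 from Matrix.det_fin_two_of _ _ _ _,
        show (matEquiv p : Matrix (Fin 2) (Fin 2) F).trace
          = p.1.1 + p.2.2 from Matrix.trace_fin_two_of _ _ _ _])).symm
  rw [Nat.card_congr ((glEquiv s).trans e2), Nat.card_eq_fintype_card,
    Fintype.card_subtype]
  exact count_quad s

end counting

lemma zmod2_cases : ∀ x : ZMod 2, x = 0 ∨ x = 1 := by decide

def Cset (n : ℕ) (r : ℤ) : Set (GL (Fin 2) (ZMod n)) :=
  {g | Matrix.det (g : Matrix (Fin 2) (Fin 2) (ZMod n)) + 1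
        - Matrix.trace (g : Matrix (Fin 2) (Fin 2) (ZMod n)) = (r : ZMod n)}


/-- For a prime `ℓ` and an integer `r`, `|C_r(ℓ)|` equals `ℓ(ℓ²-2)` if `r ≡ 0 (mod ℓ)`,
`ℓ(ℓ²-ℓ-1)` if `r ≡ 1 (mod ℓ)`, and `ℓ(ℓ²-ℓ-2)` otherwise. -/
theorem stmt6 (ℓ : ℕ) (hℓ : ℓ.Prime) (r : ℤ) :
    ((r : ZMod ℓ) = 0 → Nat.card (Cset ℓ r) = ℓ * (ℓ ^ 2 - 2)) ∧
    ((r : ZMod ℓ) = 1 → Nat.card (Cset ℓ r) = ℓ * (ℓ ^ 2 - ℓ - 1)) ∧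
    ((r : ZMod ℓ) ≠ 0 ∧ (r : ZMod ℓ) ≠ 1 →
      Nat.card (Cset ℓ r) = ℓ * (ℓ ^ 2 - ℓ - 2)) := by
  haveI := Fact.mk hℓ
  have hN : Nat.card (Cset ℓ r) =
      (ℓ - 1) * (ℓ - 1) * ℓ +
        ℓ * ((if (r : ZMod ℓ) = 0 then 2 * ℓ - 1 else ℓ - 1) -
          (if (r : ZMod ℓ) = 1 then 1 else 2)) := by
    have := card_main (F := ZMod ℓ) (r : ZMod ℓ)
    rw [ZMod.card] at this
    exact this
  have h2 : 2 ≤ ℓ := hℓ.two_le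
  refine ⟨?_, ?_, ?_⟩
  · intro h0
    rw [hN, if_pos h0, if_neg (by rw [h0]; exact zero_ne_one)]
    obtain ⟨m, rfl⟩ : ∃ m, ℓ = m + 2 := ⟨ℓ - 2, by omega⟩
    rw [show m + 2 - 1 = m + 1 by omega, show 2 * (m + 2) - 1 - 2 = 2 * m + 1 by omega,
      show (m + 2) ^ 2 = (m ^ 2 + 4 * m + 2) + 2 by ring, Nat.add_sub_cancel]
    ring
  · intro h1
    rw [hN, if_pos h1, if_neg (by rw [h1]; exact one_ne_zero)]
    obtain ⟨m, rfl⟩ : ∃ m, ℓ = m + 2 := ⟨ℓ - 2, by omega⟩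
    rw [show m + 2 - 1 = m + 1 by omega, show m + 1 - 1 = m by omega,
      show (m + 2) ^ 2 = (m ^ 2 + 3 * m + 1) + 1 + (m + 2) by ring,
      Nat.add_sub_cancel, Nat.add_sub_cancel]
    ring
  · rintro ⟨h0, h1⟩
    have h3 : 3 ≤ ℓ := by
      rcases eq_or_ne ℓ 2 with rfl | hne
      · rcases zmod2_cases (r : ZMod 2) with h | h
        · exact absurd h h0
        · exact absurd h h1
      · omega
    rw [hN, if_neg h0, if_neg h1]
    obtain ⟨m, rfl⟩ : ∃ m, ℓ = m + 3 := ⟨ℓ - 3, by omega⟩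
    rw [show m + 3 - 1 = m + 2 by omega, show m + 2 - 2 = m by omega,
      show (m + 3) ^ 2 = (m ^ 2 + 5 * m + 4) + 2 + (m + 3) by ring,
      Nat.add_sub_cancel, Nat.add_sub_cancel]
    ring
end

section
/- Let ℓ be a prime, k ≥ 1 an integer, and r an integer with r ≢ 0 (mod ℓ). Then (1/φ(ℓ^k))·(ℓ−2)/(ℓ−1) ≤ |C_r(ℓ^k)| / |GL₂(ℤ/ℓ^kℤ)| ≤ 1/φ(ℓ^k). -/
set_option maxHeartbeats 1600000

open Matrix

namespace Stmt7aux
open Finset Polynomial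

lemma card_nbij_old {α β : Type*} {s : Finset α} {t : Finset β} (i : α → β) (j : β → α)
    (hi : ∀ a ∈ s, i a ∈ t) (hj : ∀ a ∈ t, j a ∈ s)
    (left_inv : ∀ a ∈ s, j (i a) = a) (right_inv : ∀ a ∈ t, i (j a) = a) : s.card = t.card :=
  Finset.card_nbij' i j (fun a ha => hi a ha) (fun a ha => hj a ha)
    (fun a ha => left_inv a ha) (fun a ha => right_inv a ha)

section FieldCount
variable {F : Type*} [Field F] [Fintype F] [DecidableEq F]

lemma count_pairs_ne (e : F) (he : e ≠ 0) :
    (univ.filter fun p : F × F => p.1 * p.2 = e).card + 1 = Fintype.card F := by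
  have h : (univ.filter fun p : F × F => p.1 * p.2 = e).card = (univ.erase (0:F)).card := by
    refine card_nbij_old (fun p => p.1) (fun b => (b, b⁻¹ * e)) ?_ ?_ ?_ ?_
    · intro p hp
      simp only [mem_filter, mem_univ, true_and] at hp
      simp only [mem_erase, mem_univ, and_true]
      intro h0; rw [h0, zero_mul] at hp; exact he hp.symm
    · intro b hb
      simp only [mem_erase, mem_univ, and_true] at hb
      simp only [mem_filter, mem_univ, true_and]
      field_simp
    · intro p hp
      simp only [mem_filter, mem_univ, true_and] at hp
      have h1 : p.1 ≠ 0 := by rintro h0; rw [h0, zero_mul] at hp; exact he hp.symm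
      have : p.1⁻¹ * e = p.2 := by
        rw [← hp]; field_simp
      simp [this]
    · intro b hb; rfl
  rw [h, Finset.card_erase_of_mem (mem_univ 0), Finset.card_univ]
  have := Fintype.card_pos_iff.mpr ⟨(0:F)⟩
  omega

lemma count_pairs_zero :
    (univ.filter fun p : F × F => p.1 * p.2 = (0:F)).card + 1 = 2 * Fintype.card F := by
  have h1 : (univ.filter fun p : F × F => p.1 * p.2 = (0:F))
      = (univ.filter fun p : F × F => p.1 = 0) ∪ (univ.filter fun p : F × F => p.2 = 0) := by
    rw [← Finset.filter_or]; simp [mul_eq_zero]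
  have h2 : (univ.filter fun p : F × F => p.1 = 0) ∩ (univ.filter fun p : F × F => p.2 = 0)
      = {((0 : F), (0 : F))} := by
    rw [← Finset.filter_and]; ext p; simp [Prod.ext_iff]
  have hA : (univ.filter fun p : F × F => p.1 = 0).card = Fintype.card F := by
    rw [← Finset.card_univ (α := F)]
    refine card_nbij_old (fun p => p.2) (fun c => (0, c)) (by simp) (by simp) ?_ (by simp)
    intro p hp; simp only [mem_filter, mem_univ, true_and] at hp
    simp [Prod.ext_iff, hp.symm]
  have hB : (univ.filter fun p : F × F => p.2 = 0).card = Fintype.card F := by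
    rw [← Finset.card_univ (α := F)]
    refine card_nbij_old (fun p => p.1) (fun c => (c, 0)) (by simp) (by simp) ?_ (by simp)
    intro p hp; simp only [mem_filter, mem_univ, true_and] at hp
    simp [Prod.ext_iff, hp.symm]
  have := Finset.card_union_add_card_inter
    (univ.filter fun p : F × F => p.1 = 0) (univ.filter fun p : F × F => p.2 = 0)
  rw [h2, hA, hB, Finset.card_singleton] at this
  rw [h1, this]; ring
lemma count_pairs' (e : F) :
    (univ.filter fun p : F × F => p.1 * p.2 = e).card + 1
      = if e = 0 then 2 * Fintype.card F else Fintype.card F := by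
  by_cases h : e = 0
  · rw [if_pos h, h]; exact count_pairs_zero
  · rw [if_neg h]; exact count_pairs_ne e h

lemma count_mat (r t : F) :
    (univ.filter fun m : Matrix (Fin 2) (Fin 2) F => m.det = r ∧ m.trace = t).card
        + Fintype.card F
      = Fintype.card F * Fintype.card F
        + (univ.filter fun a : F => a * (t - a) = r).card * Fintype.card F := by
  classical
  set q := Fintype.card F
  set s := (univ.filter fun m : Matrix (Fin 2) (Fin 2) F => m.det = r ∧ m.trace = t) with hs
  have hfib : s.card = ∑ a : F, (s.filter fun m => m 0 0 = a).card :=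
    Finset.card_eq_sum_card_fiberwise (fun m _ => mem_univ _)
  have hinner : ∀ a : F, (s.filter fun m => m 0 0 = a).card
      = (univ.filter fun p : F × F => p.1 * p.2 = a * (t - a) - r).card := by
    intro a
    refine card_nbij_old (fun m => (m 0 1, m 1 0)) (fun p => !![a, p.1; p.2, t - a])
      ?_ ?_ ?_ ?_
    · intro m hm
      simp only [hs, mem_filter, mem_univ, true_and, Matrix.det_fin_two,
        Matrix.trace_fin_two] at hm
      obtain ⟨⟨hdet, htr⟩, ha⟩ := hm
      simp only [mem_filter, mem_univ, true_and]
      have h11 : m 1 1 = t - a := by rw [← htr, ha]; ring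
      rw [← hdet, ha, h11]; ring
    · intro p hp
      simp only [mem_filter, mem_univ, true_and] at hp
      simp only [hs, mem_filter, mem_univ, true_and, Matrix.det_fin_two,
        Matrix.trace_fin_two]
      refine ⟨⟨?_, ?_⟩, ?_⟩ <;> simp <;> linear_combination -hp
    · intro m hm
      simp only [hs, mem_filter, mem_univ, true_and, Matrix.det_fin_two,
        Matrix.trace_fin_two] at hm
      obtain ⟨⟨hdet, htr⟩, ha⟩ := hm
      have h11 : m 1 1 = t - a := by rw [← htr, ha]; ring
      show !![a, m 0 1; m 1 0, t - a] = m
      rw [← h11, ← ha]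
      exact (Matrix.eta_fin_two m).symm
    · intro p hp; simp
  have hsum : s.card = ∑ a : F, (univ.filter fun p : F × F => p.1 * p.2 = a * (t - a) - r).card := by
    rw [hfib]; exact Finset.sum_congr rfl fun a _ => hinner a
  have h2 : s.card + q = ∑ a : F, ((univ.filter fun p : F × F => p.1 * p.2 = a * (t - a) - r).card + 1) := by
    rw [Finset.sum_add_distrib, ← hsum]; simp [q]
  have h3 : s.card + q = ∑ a : F, (if a * (t - a) = r then 2 * q else q) := by
    rw [h2]; refine Finset.sum_congr rfl fun a _ => ?_
    rw [count_pairs' (a * (t - a) - r)]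
    by_cases h : a * (t - a) = r <;> simp [sub_eq_zero, h, q]
  rw [Finset.sum_ite, Finset.sum_const, Finset.sum_const, smul_eq_mul, smul_eq_mul] at h3
  have h4 : (univ.filter fun a : F => a * (t - a) = r).card
      + (univ.filter fun a : F => ¬ (a * (t - a) = r)).card = q :=
    Finset.card_filter_add_card_filter_not _
  zify at h3 h4 ⊢
  linear_combination h3 + q * h4
lemma roots_le_two (r t : F) : (univ.filter fun a : F => a * (t - a) = r).card ≤ 2 := by
  classical
  set p : F[X] := C 1 * X ^ 2 + C (-t) * X + C r with hp
  have hdeg : p.natDegree = 2 := Polynomial.natDegree_quadratic (by norm_num)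
  have hp0 : p ≠ 0 := fun h => by simp [h] at hdeg
  have hsub : (univ.filter fun a : F => a * (t - a) = r) ⊆ p.roots.toFinset := by
    intro a ha
    simp only [mem_filter, mem_univ, true_and] at ha
    rw [Multiset.mem_toFinset, Polynomial.mem_roots hp0]
    simp only [Polynomial.IsRoot, hp, Polynomial.eval_add, Polynomial.eval_mul,
      Polynomial.eval_pow, Polynomial.eval_C, Polynomial.eval_X]
    linear_combination -ha
  calc (univ.filter fun a : F => a * (t - a) = r).card
      ≤ p.roots.toFinset.card := Finset.card_le_card hsub
    _ ≤ Multiset.card p.roots := Multiset.toFinset_card_le _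
    _ ≤ p.natDegree := Polynomial.card_roots' p
    _ = 2 := hdeg

lemma sum_roots (r : F) (hr : r ≠ 0) :
    (∑ t : F, (univ.filter fun a : F => a * (t - a) = r).card) + 1 = Fintype.card F := by
  classical
  have h1 : (∑ t : F, (univ.filter fun a : F => a * (t - a) = r).card)
      = (univ.filter fun p : F × F => p.2 * (p.1 - p.2) = r).card := by
    rw [Finset.card_eq_sum_card_fiberwise (f := fun p : F × F => p.1)
      (t := univ) (fun _ _ => mem_univ _)]
    refine Finset.sum_congr rfl fun t _ => ?_
    symm
    refine card_nbij_old (fun p => p.2) (fun a => (t, a)) ?_ ?_ ?_ ?_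
    · intro p hp; simp only [mem_filter, mem_univ, true_and] at hp ⊢
      rw [hp.2] at hp; exact hp.1
    · intro a ha; simp only [mem_filter, mem_univ, true_and] at ha ⊢
      exact ⟨ha, trivial⟩
    · intro p hp; simp only [mem_filter, mem_univ, true_and] at hp
      rw [← hp.2]
    · intro a _; rfl
  have h2 : (univ.filter fun p : F × F => p.2 * (p.1 - p.2) = r).card
      = (univ.erase (0:F)).card := by
    refine card_nbij_old (fun p => p.2) (fun a => (a + r * a⁻¹, a)) ?_ ?_ ?_ (by simp)
    · intro p hp
      simp only [mem_filter, mem_univ, true_and] at hp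
      simp only [mem_erase, mem_univ, and_true]
      intro h0; rw [h0, zero_mul] at hp; exact hr hp.symm
    · intro a ha
      simp only [mem_erase, mem_univ, and_true] at ha
      simp only [mem_filter, mem_univ, true_and]
      field_simp; ring
    · intro p hp
      simp only [mem_filter, mem_univ, true_and] at hp
      have h0 : p.2 ≠ 0 := by intro h0; rw [h0, zero_mul] at hp; exact hr hp.symm
      have h1 : p.2 + r * p.2⁻¹ = p.1 := by rw [← hp]; field_simp; ring
      show (p.2 + r * p.2⁻¹, p.2) = p
      rw [h1]
  rw [h1, h2, Finset.card_erase_of_mem (mem_univ 0), Finset.card_univ]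
  have := Fintype.card_pos_iff.mpr ⟨(0:F)⟩
  omega
lemma key_field (r : F) (hr : r ≠ 0) (c : F) :
    Fintype.card F *
      (univ.filter fun m : Matrix (Fin 2) (Fin 2) F => m.det = r ∧ m.trace = c).card
    ≤ (∑ t : F, (univ.filter fun m : Matrix (Fin 2) (Fin 2) F => m.det = r ∧ m.trace = t).card)
      + (univ.filter fun m : Matrix (Fin 2) (Fin 2) F => m.det = r ∧ m.trace = c).card := by
  classical
  set q := Fintype.card F with hq
  set N : F → ℕ := fun t =>
    (univ.filter fun m : Matrix (Fin 2) (Fin 2) F => m.det = r ∧ m.trace = t).card with hN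
  set s : F → ℕ := fun t => (univ.filter fun a : F => a * (t - a) = r).card with hsdef
  have hmat : ∀ t, N t + q = q * q + s t * q := fun t => count_mat r t
  have hsum : (∑ t : F, N t) + q * q = q * q * q + (∑ t : F, s t) * q := by
    have := Finset.sum_congr rfl (fun t (_ : t ∈ (univ : Finset F)) => hmat t)
    rw [Finset.sum_add_distrib, Finset.sum_add_distrib, Finset.sum_const, Finset.sum_const,
      card_univ, ← hq, smul_eq_mul, smul_eq_mul, ← Finset.sum_mul] at this
    zify at this ⊢
    linear_combination this
  have hc2 : s c ≤ 2 := roots_le_two r c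
  have hs1 : (∑ t : F, s t) + 1 = q := sum_roots r hr
  have hqpos : 1 ≤ q := le_of_eq_of_le rfl (Fintype.card_pos_iff.mpr ⟨(0:F)⟩)
  -- combine
  have hmc := hmat c
  zify at hmat hsum hc2 hs1 hmc ⊢
  nlinarith [hsum, hmc, hc2, hs1, hqpos, mul_nonneg (mul_nonneg (by positivity : (0:ℤ) ≤ (q:ℤ)) (by linarith : (0:ℤ) ≤ (q:ℤ) - 1)) (by linarith : (0:ℤ) ≤ 2 - (s c : ℤ))]

end FieldCount

lemma crit {ℓ k : ℕ} (hℓ : ℓ.Prime) (hk : 1 ≤ k) (h : ℓ ∣ ℓ ^ k) (x : ZMod (ℓ^k)) :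
    IsUnit x ↔ (ZMod.castHom h (ZMod ℓ)) x ≠ 0 := by
  haveI : NeZero (ℓ^k) := ⟨pow_ne_zero _ hℓ.pos.ne'⟩
  rw [ZMod.castHom_apply, ← ZMod.natCast_val, Ne, ZMod.natCast_eq_zero_iff]
  conv_lhs => rw [← ZMod.natCast_zmod_val x]
  rw [ZMod.isUnit_iff_coprime, Nat.coprime_pow_right_iff hk]
  exact Nat.coprime_comm.trans (Nat.Prime.coprime_iff_not_dvd hℓ)


def PI {N M : ℕ} (h : M ∣ N) :
    Matrix (Fin 2) (Fin 2) (ZMod N) →+* Matrix (Fin 2) (Fin 2) (ZMod M) :=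
  (ZMod.castHom h (ZMod M)).mapMatrix

lemma PI_det {N M : ℕ} (h : M ∣ N) (m : Matrix (Fin 2) (Fin 2) (ZMod N)) :
    (PI h m).det = ZMod.castHom h (ZMod M) m.det := ((ZMod.castHom h (ZMod M)).map_det m).symm

lemma PI_trace {N M : ℕ} (h : M ∣ N) (m : Matrix (Fin 2) (Fin 2) (ZMod N)) :
    (PI h m).trace = ZMod.castHom h (ZMod M) m.trace := by
  simp [PI, RingHom.mapMatrix_apply, Matrix.trace_fin_two, Matrix.map_apply, map_add]

lemma lift_exists {N M : ℕ} [NeZero M] (h : M ∣ N) (r : ℤ) (hrM : ((r : ZMod M)) ≠ 0)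
    (hcrit : ∀ x : ZMod N, IsUnit x ↔ ZMod.castHom h (ZMod M) x ≠ 0)
    (mb : Matrix (Fin 2) (Fin 2) (ZMod M)) (hdet : mb.det = (r : ZMod M)) :
    ∃ m₀ : Matrix (Fin 2) (Fin 2) (ZMod N), PI h m₀ = mb ∧ m₀.det = (r : ZMod N) := by
  classical
  set π := ZMod.castHom h (ZMod M) with hπ
  set m₁ : Matrix (Fin 2) (Fin 2) (ZMod N) := mb.map (fun x => (x.val : ZMod N)) with hm₁
  have hred : PI h m₁ = mb := by
    ext i j
    simp [PI, RingHom.mapMatrix_apply, Matrix.map_apply, hm₁, map_natCast,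
      ZMod.natCast_zmod_val]
  have hπdet : π m₁.det = (r : ZMod M) := by rw [← hdet, ← PI_det h, hred]
  have hu : IsUnit m₁.det := (hcrit _).mpr (by rw [hπdet]; exact hrM)
  set v : ZMod N := ↑hu.unit⁻¹ with hv
  have huv : m₁.det * v = 1 := hu.mul_val_inv
  set D : Matrix (Fin 2) (Fin 2) (ZMod N) := Matrix.diagonal ![(r : ZMod N) * v, 1] with hD
  refine ⟨m₁ * D, ?_, ?_⟩
  · have hπrv : π ((r : ZMod N) * v) = 1 := by
      have h1 : π m₁.det * π v = 1 := by rw [← _root_.map_mul, huv, _root_.map_one]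
      rw [_root_.map_mul, map_intCast, ← hπdet, h1]
    have hPD : PI h D = 1 := by
      rw [hD, PI, RingHom.mapMatrix_apply, Matrix.diagonal_map (map_zero π)]
      have h2 : (fun i => π (![(r : ZMod N) * v, 1] i)) = fun _ => (1 : ZMod M) := by
        funext i
        fin_cases i <;> simp [hπrv]
      rw [h2]
      exact Matrix.diagonal_one
    rw [_root_.map_mul, hred, hPD, mul_one]
  · rw [Matrix.det_mul, hD, Matrix.det_diagonal]
    simp [Fin.prod_univ_two]
    rw [← mul_assoc, mul_comm (m₁.det) _, mul_assoc, huv, mul_one]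


lemma fiber_count {N M : ℕ} [NeZero M] [NeZero N] (h : M ∣ N) (r : ℤ)
    (hrM : ((r : ZMod M)) ≠ 0)
    (hcrit : ∀ x : ZMod N, IsUnit x ↔ ZMod.castHom h (ZMod M) x ≠ 0)
    (mb : Matrix (Fin 2) (Fin 2) (ZMod M)) (hdet : mb.det = (r : ZMod M)) :
    (univ.filter fun m : Matrix (Fin 2) (Fin 2) (ZMod N) =>
        PI h m = mb ∧ m.det = (r : ZMod N)).card
      = (univ.filter fun u : Matrix (Fin 2) (Fin 2) (ZMod N) =>
          PI h u = 1 ∧ u.det = 1).card := by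
  classical
  obtain ⟨m₀, hm₀red, hm₀det⟩ := lift_exists h r hrM hcrit mb hdet
  have hu : IsUnit m₀.det := by
    rw [hcrit, ← PI_det h, hm₀red, hdet]; exact hrM
  have hU : IsUnit m₀ := (Matrix.isUnit_iff_isUnit_det m₀).mpr hu
  set U := hU.unit with hUdef
  have hUval : (U : Matrix (Fin 2) (Fin 2) (ZMod N)) = m₀ := hU.unit_spec
  have hinv1 : (↑U⁻¹ : Matrix (Fin 2) (Fin 2) (ZMod N)) * m₀ = 1 := by
    rw [← hUval]; exact U.inv_mul
  have hinv2 : m₀ * (↑U⁻¹ : Matrix (Fin 2) (Fin 2) (ZMod N)) = 1 := by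
    rw [← hUval]; exact U.mul_inv
  have hπinv : PI h (↑U⁻¹) * mb = 1 := by
    rw [← hm₀red, ← _root_.map_mul, hinv1, _root_.map_one]
  have hπinv2 : mb * PI h (↑U⁻¹) = 1 := by
    rw [← hm₀red, ← _root_.map_mul, hinv2, _root_.map_one]
  have hdinv : (↑U⁻¹ : Matrix (Fin 2) (Fin 2) (ZMod N)).det * (r : ZMod N) = 1 := by
    rw [← hm₀det, ← Matrix.det_mul, hinv1, Matrix.det_one]
  refine card_nbij_old (fun m => (↑U⁻¹ : Matrix (Fin 2) (Fin 2) (ZMod N)) * m)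
    (fun u => m₀ * u) ?_ ?_ ?_ ?_
  · intro m hm
    simp only [mem_filter, mem_univ, true_and] at hm ⊢
    obtain ⟨h1, h2⟩ := hm
    constructor
    · rw [_root_.map_mul, h1, hπinv]
    · rw [Matrix.det_mul, h2, hdinv]
  · intro u hu2
    simp only [mem_filter, mem_univ, true_and] at hu2 ⊢
    obtain ⟨h1, h2⟩ := hu2
    constructor
    · rw [_root_.map_mul, h1, mul_one, hm₀red]
    · rw [Matrix.det_mul, h2, mul_one, hm₀det]
  · intro m _; show m₀ * (_ * m) = m; rw [← mul_assoc, hinv2, one_mul]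
  · intro u _; show _ * (m₀ * u) = u; rw [← mul_assoc, hinv1, one_mul]

lemma Nt_count {N M : ℕ} [NeZero M] [NeZero N] (h : M ∣ N) (r : ℤ)
    (hrM : ((r : ZMod M)) ≠ 0)
    (hcrit : ∀ x : ZMod N, IsUnit x ↔ ZMod.castHom h (ZMod M) x ≠ 0)
    (t : ZMod M) :
    (univ.filter fun m : Matrix (Fin 2) (Fin 2) (ZMod N) =>
        m.det = (r : ZMod N) ∧ (PI h m).trace = t).card
      = (univ.filter fun mb : Matrix (Fin 2) (Fin 2) (ZMod M) =>
            mb.det = (r : ZMod M) ∧ mb.trace = t).card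
        * (univ.filter fun u : Matrix (Fin 2) (Fin 2) (ZMod N) =>
            PI h u = 1 ∧ u.det = 1).card := by
  classical
  set s := univ.filter fun m : Matrix (Fin 2) (Fin 2) (ZMod N) =>
      m.det = (r : ZMod N) ∧ (PI h m).trace = t with hs
  set tb := univ.filter fun mb : Matrix (Fin 2) (Fin 2) (ZMod M) =>
      mb.det = (r : ZMod M) ∧ mb.trace = t with htb
  have hmap : ∀ m ∈ s, PI h m ∈ tb := by
    intro m hm
    simp only [hs, mem_filter, mem_univ, true_and] at hm
    simp only [htb, mem_filter, mem_univ, true_and]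
    refine ⟨?_, hm.2⟩
    rw [PI_det h, hm.1, map_intCast]
  rw [Finset.card_eq_sum_card_fiberwise hmap]
  have hfib : ∀ mb ∈ tb, (s.filter fun m => PI h m = mb).card
      = (univ.filter fun u : Matrix (Fin 2) (Fin 2) (ZMod N) =>
          PI h u = 1 ∧ u.det = 1).card := by
    intro mb hmb
    simp only [htb, mem_filter, mem_univ, true_and] at hmb
    rw [show s.filter (fun m => PI h m = mb)
        = univ.filter (fun m : Matrix (Fin 2) (Fin 2) (ZMod N) =>
            PI h m = mb ∧ m.det = (r : ZMod N)) by
      ext m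
      simp only [hs, mem_filter, mem_univ, true_and]
      constructor
      · rintro ⟨⟨h1, _⟩, h3⟩; exact ⟨h3, h1⟩
      · rintro ⟨h1, h2⟩; exact ⟨⟨h2, by rw [h1, hmb.2]⟩, h1⟩]
    exact fiber_count h r hrM hcrit mb hmb.1
  rw [Finset.sum_congr rfl hfib, Finset.sum_const, smul_eq_mul]

lemma S_count {N M : ℕ} [NeZero M] [NeZero N] (h : M ∣ N) (r : ℤ) :
    (univ.filter fun m : Matrix (Fin 2) (Fin 2) (ZMod N) => m.det = (r : ZMod N)).card
      = ∑ t : ZMod M, (univ.filter fun m : Matrix (Fin 2) (Fin 2) (ZMod N) =>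
          m.det = (r : ZMod N) ∧ (PI h m).trace = t).card := by
  classical
  rw [Finset.card_eq_sum_card_fiberwise
    (f := fun m : Matrix (Fin 2) (Fin 2) (ZMod N) => (PI h m).trace) (t := univ)
    (fun m _ => mem_univ _)]
  refine Finset.sum_congr rfl fun t _ => ?_
  congr 1
  ext m
  simp only [mem_filter, mem_univ, true_and, and_comm]

noncomputable def unitsEquivSubtype {M : Type*} [Monoid M] : Mˣ ≃ {x : M // IsUnit x} where
  toFun u := ⟨u, u.isUnit⟩
  invFun x := x.2.unit
  left_inv u := Units.ext u.isUnit.unit_spec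
  right_inv x := Subtype.ext x.2.unit_spec

lemma det_fiber_eq {N : ℕ} [NeZero N] (w₁ w₂ : (ZMod N)ˣ) :
    (univ.filter fun m : Matrix (Fin 2) (Fin 2) (ZMod N) => m.det = (w₁ : ZMod N)).card
      = (univ.filter fun m : Matrix (Fin 2) (Fin 2) (ZMod N) => m.det = (w₂ : ZMod N)).card := by
  classical
  have key : ∀ (a b : (ZMod N)ˣ) (m : Matrix (Fin 2) (Fin 2) (ZMod N)),
      m * Matrix.diagonal ![(a : ZMod N), 1] * Matrix.diagonal ![(b : ZMod N), 1]
        = m * Matrix.diagonal ![((a * b : (ZMod N)ˣ) : ZMod N), 1] := by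
    intro a b m
    rw [mul_assoc, Matrix.diagonal_mul_diagonal]
    have hv : (fun i => ![(a : ZMod N),1] i * ![(b : ZMod N),1] i)
        = ![((a*b : (ZMod N)ˣ) : ZMod N), 1] := by
      funext i; fin_cases i <;> simp
    rw [hv]
  refine card_nbij_old
    (fun m => m * Matrix.diagonal ![((w₁⁻¹ * w₂ : (ZMod N)ˣ) : ZMod N), 1])
    (fun m => m * Matrix.diagonal ![((w₂⁻¹ * w₁ : (ZMod N)ˣ) : ZMod N), 1]) ?_ ?_ ?_ ?_
  · intro m hm
    simp only [mem_filter, mem_univ, true_and] at hm ⊢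
    rw [Matrix.det_mul, hm, Matrix.det_diagonal]
    simp [Fin.prod_univ_two, Units.val_mul]
  · intro m hm
    simp only [mem_filter, mem_univ, true_and] at hm ⊢
    rw [Matrix.det_mul, hm, Matrix.det_diagonal]
    simp [Fin.prod_univ_two, Units.val_mul]
  · intro m _
    show m * _ * _ = m
    rw [key]
    have : (w₁⁻¹ * w₂ * (w₂⁻¹ * w₁)) = 1 := by group
    rw [this]
    have h1 : ![((1 : (ZMod N)ˣ) : ZMod N), 1] = fun _ => (1 : ZMod N) := by
      funext i; fin_cases i <;> simp
    rw [h1, Matrix.diagonal_one, mul_one]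
  · intro m _
    show m * _ * _ = m
    rw [key]
    have : (w₂⁻¹ * w₁ * (w₁⁻¹ * w₂)) = 1 := by group
    rw [this]
    have h1 : ![((1 : (ZMod N)ˣ) : ZMod N), 1] = fun _ => (1 : ZMod N) := by
      funext i; fin_cases i <;> simp
    rw [h1, Matrix.diagonal_one, mul_one]

lemma GL_card {N : ℕ} [NeZero N] (r : ℤ) (hru : IsUnit ((r : ZMod N))) :
    Nat.card (GL (Fin 2) (ZMod N))
      = N.totient
        * (univ.filter fun m : Matrix (Fin 2) (Fin 2) (ZMod N) => m.det = (r : ZMod N)).card := by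
  classical
  rw [Nat.card_eq_fintype_card]
  have e1 : Fintype.card (GL (Fin 2) (ZMod N))
      = Fintype.card {m : Matrix (Fin 2) (Fin 2) (ZMod N) // IsUnit m.det} := by
    refine Fintype.card_congr (unitsEquivSubtype.trans (Equiv.subtypeEquiv (Equiv.refl _) ?_))
    intro m
    exact Matrix.isUnit_iff_isUnit_det m
  rw [e1, Fintype.card_subtype]
  have e2 : (univ.filter fun m : Matrix (Fin 2) (Fin 2) (ZMod N) => IsUnit m.det).card
      = ∑ w ∈ univ.filter (fun w : ZMod N => IsUnit w),
          ((univ.filter fun m : Matrix (Fin 2) (Fin 2) (ZMod N) => IsUnit m.det).filter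
            (fun m => m.det = w)).card := by
    refine Finset.card_eq_sum_card_fiberwise ?_
    intro m hm
    simp only [Finset.mem_coe, mem_filter, mem_univ, true_and] at hm ⊢
    exact hm
  rw [e2]
  have e3 : ∀ w ∈ univ.filter (fun w : ZMod N => IsUnit w),
      ((univ.filter fun m : Matrix (Fin 2) (Fin 2) (ZMod N) => IsUnit m.det).filter
            (fun m => m.det = w)).card
        = (univ.filter fun m : Matrix (Fin 2) (Fin 2) (ZMod N) => m.det = (r : ZMod N)).card := by
    intro w hw
    simp only [mem_filter, mem_univ, true_and] at hw
    rw [show (univ.filter fun m : Matrix (Fin 2) (Fin 2) (ZMod N) => IsUnit m.det).filter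
            (fun m => m.det = w)
        = univ.filter fun m : Matrix (Fin 2) (Fin 2) (ZMod N) => m.det = (hw.unit : ZMod N) by
      ext m
      simp only [Finset.filter_filter, mem_filter, mem_univ, true_and, hw.unit_spec, Set.mem_setOf_eq]
      constructor
      · exact fun h => Finset.mem_filter.mpr ⟨mem_univ _, h.2⟩
      · exact fun h => ⟨(Finset.mem_filter.mp h).2 ▸ hw, (Finset.mem_filter.mp h).2⟩]
    rw [det_fiber_eq hw.unit hru.unit, hru.unit_spec]
  rw [Finset.sum_congr rfl e3, Finset.sum_const, smul_eq_mul]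
  congr 1
  rw [← ZMod.card_units_eq_totient, ← Fintype.card_subtype]
  exact (Fintype.card_congr unitsEquivSubtype).symm

lemma det_sub_one {R : Type*} [CommRing R] (m : Matrix (Fin 2) (Fin 2) R) :
    m.det + 1 - m.trace = (m - 1).det := by
  simp [Matrix.det_fin_two, Matrix.trace_fin_two, Matrix.one_apply]
  ring

lemma det_add_one {R : Type*} [CommRing R] (m : Matrix (Fin 2) (Fin 2) R) :
    (m + 1).det = m.det + m.trace + 1 := by
  simp [Matrix.det_fin_two, Matrix.trace_fin_two, Matrix.one_apply]
  ring

lemma C_card_matrix {N : ℕ} [NeZero N] (r : ℤ) :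
    Nat.card (Cset N r) = (univ.filter fun m : Matrix (Fin 2) (Fin 2) (ZMod N) =>
      IsUnit m.det ∧ m.det + 1 - m.trace = (r : ZMod N)).card := by
  classical
  have e : Cset N r ≃ {m : Matrix (Fin 2) (Fin 2) (ZMod N) //
      IsUnit m.det ∧ m.det + 1 - m.trace = (r : ZMod N)} :=
    { toFun := fun g => ⟨((g : GL (Fin 2) (ZMod N)) : Matrix (Fin 2) (Fin 2) (ZMod N)),
        (Matrix.isUnit_iff_isUnit_det _).mp (g : GL (Fin 2) (ZMod N)).isUnit, g.2⟩
      invFun := fun m => ⟨((Matrix.isUnit_iff_isUnit_det _).mpr m.2.1).unit, by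
        have hs : (((Matrix.isUnit_iff_isUnit_det _).mpr m.2.1).unit :
            Matrix (Fin 2) (Fin 2) (ZMod N)) = m.1 :=
          ((Matrix.isUnit_iff_isUnit_det _).mpr m.2.1).unit_spec
        show _ ∈ Cset N r
        simp only [Cset, Set.mem_setOf_eq, hs]
        exact m.2.2⟩
      left_inv := fun g => Subtype.ext (Units.ext
        (((Matrix.isUnit_iff_isUnit_det _).mpr
          ((Matrix.isUnit_iff_isUnit_det _).mp (g : GL (Fin 2) (ZMod N)).isUnit)).unit_spec))
      right_inv := fun m => Subtype.ext
        (((Matrix.isUnit_iff_isUnit_det _).mpr m.2.1).unit_spec) }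
  rw [Nat.card_congr e, Nat.card_eq_fintype_card, Fintype.card_subtype]

lemma C_card {N M : ℕ} [NeZero M] [NeZero N] (h : M ∣ N) (r : ℤ)
    (hcrit : ∀ x : ZMod N, IsUnit x ↔ ZMod.castHom h (ZMod M) x ≠ 0) :
    Nat.card (Cset N r)
      + (univ.filter fun m : Matrix (Fin 2) (Fin 2) (ZMod N) =>
          m.det = (r : ZMod N) ∧ (PI h m).trace = -((r : ZMod M) + 1)).card
      = (univ.filter fun m : Matrix (Fin 2) (Fin 2) (ZMod N) =>
          m.det = (r : ZMod N)).card := by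
  classical
  rw [C_card_matrix r]
  set π := ZMod.castHom h (ZMod M) with hπ
  -- shift bijection
  have hshift : (univ.filter fun m : Matrix (Fin 2) (Fin 2) (ZMod N) =>
        IsUnit m.det ∧ m.det + 1 - m.trace = (r : ZMod N)).card
      = (univ.filter fun p : Matrix (Fin 2) (Fin 2) (ZMod N) =>
          p.det = (r : ZMod N) ∧ IsUnit (p + 1).det).card := by
    refine card_nbij_old (fun m => m - 1) (fun p => p + 1) ?_ ?_ ?_ ?_
    · intro m hm
      simp only [mem_filter, mem_univ, true_and] at hm ⊢
      obtain ⟨h1, h2⟩ := hm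
      refine ⟨by rw [← det_sub_one, h2], by rw [sub_add_cancel]; exact h1⟩
    · intro p hp
      simp only [mem_filter, mem_univ, true_and] at hp ⊢
      obtain ⟨h1, h2⟩ := hp
      refine ⟨h2, by rw [det_sub_one, add_sub_cancel_right]; exact h1⟩
    · intro m _; exact sub_add_cancel m 1
    · intro p _; exact add_sub_cancel_right p 1
  rw [hshift]
  have hbad : (univ.filter fun m : Matrix (Fin 2) (Fin 2) (ZMod N) =>
        m.det = (r : ZMod N) ∧ (PI h m).trace = -((r : ZMod M) + 1))
      = (univ.filter fun p : Matrix (Fin 2) (Fin 2) (ZMod N) =>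
          p.det = (r : ZMod N) ∧ ¬ IsUnit (p + 1).det) := by
    ext p
    simp only [mem_filter, mem_univ, true_and]
    refine and_congr_right fun hdet => ?_
    rw [hcrit, not_not]
    have hdet1 : π (p + 1).det = (r : ZMod M) + π p.trace + 1 := by
      rw [det_add_one, map_add, map_add, _root_.map_one, hdet, map_intCast]
    rw [PI_trace h]
    show π p.trace = -((r : ZMod M) + 1) ↔ _
    rw [hdet1]
    constructor
    · intro h1; rw [h1]; ring
    · intro h1; linear_combination h1
  rw [hbad]
  have hdisj : Disjoint
      (univ.filter fun p : Matrix (Fin 2) (Fin 2) (ZMod N) =>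
        p.det = (r : ZMod N) ∧ IsUnit (p + 1).det)
      (univ.filter fun p : Matrix (Fin 2) (Fin 2) (ZMod N) =>
        p.det = (r : ZMod N) ∧ ¬ IsUnit (p + 1).det) := by
    rw [Finset.disjoint_left]
    intro a ha hb
    simp only [mem_filter, mem_univ, true_and] at ha hb
    exact hb.2 ha.2
  rw [← Finset.card_union_of_disjoint hdisj]
  congr 1
  ext p
  simp only [mem_union, mem_filter, mem_univ, true_and]
  tauto


end Stmt7aux

open Stmt7aux Finset in
/-- For a prime `ℓ`, `k ≥ 1` and an integer `r ≢ 0 (mod ℓ)`: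
`(1/φ(ℓ^k))·(ℓ-2)/(ℓ-1) ≤ |C_r(ℓ^k)|/|GL₂(ℤ/ℓ^kℤ)| ≤ 1/φ(ℓ^k)`. -/
theorem stmt7 (ℓ k : ℕ) (hℓ : ℓ.Prime) (hk : 1 ≤ k) (r : ℤ) (hr : (r : ZMod ℓ) ≠ 0) :
    (1 / (Nat.totient (ℓ ^ k) : ℝ)) * (((ℓ : ℝ) - 2) / ((ℓ : ℝ) - 1))
      ≤ (Nat.card (Cset (ℓ ^ k) r) : ℝ) / (Nat.card (GL (Fin 2) (ZMod (ℓ ^ k))) : ℝ) ∧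
    (Nat.card (Cset (ℓ ^ k) r) : ℝ) / (Nat.card (GL (Fin 2) (ZMod (ℓ ^ k))) : ℝ)
      ≤ 1 / (Nat.totient (ℓ ^ k) : ℝ) := by
  classical
  haveI : Fact ℓ.Prime := ⟨hℓ⟩
  haveI : NeZero ℓ := ⟨hℓ.pos.ne'⟩
  haveI : NeZero (ℓ ^ k) := ⟨pow_ne_zero _ hℓ.pos.ne'⟩
  have hk0 : k ≠ 0 := by omega
  have h : ℓ ∣ ℓ ^ k := dvd_pow_self ℓ hk0
  have hcrit : ∀ x : ZMod (ℓ^k), IsUnit x ↔ (ZMod.castHom h (ZMod ℓ)) x ≠ 0 :=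
    crit hℓ hk h
  have hru : IsUnit ((r : ℤ) : ZMod (ℓ^k)) := by
    rw [hcrit, map_intCast]; exact hr
  set c : ZMod ℓ := -((r : ZMod ℓ) + 1) with hc
  set S := (univ.filter fun m : Matrix (Fin 2) (Fin 2) (ZMod (ℓ^k)) =>
      m.det = (r : ZMod (ℓ^k))).card with hSdef
  set Nc := (univ.filter fun m : Matrix (Fin 2) (Fin 2) (ZMod (ℓ^k)) =>
      m.det = (r : ZMod (ℓ^k)) ∧ (PI h m).trace = c).card with hNcdef
  set T := (univ.filter fun u : Matrix (Fin 2) (Fin 2) (ZMod (ℓ^k)) =>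
      PI h u = 1 ∧ u.det = 1).card with hTdef
  set Mt : ZMod ℓ → ℕ := fun t => (univ.filter fun mb : Matrix (Fin 2) (Fin 2) (ZMod ℓ) =>
      mb.det = (r : ZMod ℓ) ∧ mb.trace = t).card with hMtdef
  have hNc : Nc = Mt c * T := Nt_count h r hr hcrit c
  have hS : S = (∑ t : ZMod ℓ, Mt t) * T := by
    rw [hSdef, S_count h r, Finset.sum_mul]
    exact Finset.sum_congr rfl fun t _ => Nt_count h r hr hcrit t
  have hkeyF : ℓ * Mt c ≤ (∑ t : ZMod ℓ, Mt t) + Mt c := by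
    have := key_field (F := ZMod ℓ) (r : ZMod ℓ) hr c
    rwa [ZMod.card ℓ] at this
  have hkeyN : ℓ * Nc ≤ S + Nc := by
    calc ℓ * Nc = (ℓ * Mt c) * T := by rw [hNc]; ring
      _ ≤ ((∑ t : ZMod ℓ, Mt t) + Mt c) * T := Nat.mul_le_mul_right T hkeyF
      _ = S + Nc := by rw [hS, hNc, add_mul]
  have hG : Nat.card (GL (Fin 2) (ZMod (ℓ^k))) = (ℓ^k).totient * S := GL_card r hru
  have hC : Nat.card (Cset (ℓ^k) r) + Nc = S := C_card h r hcrit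
  have hSpos : 0 < S := by
    rw [hSdef]
    refine Finset.card_pos.mpr ⟨Matrix.diagonal ![(r : ZMod (ℓ^k)), 1], ?_⟩
    simp only [mem_filter, mem_univ, true_and, Matrix.det_diagonal]
    simp [Fin.prod_univ_two]
  have hφpos : 0 < (ℓ^k).totient := Nat.totient_pos.mpr (pow_pos hℓ.pos k)
  have hl2 : 2 ≤ ℓ := hℓ.two_le
  -- real versions
  have hCval : ((Nat.card (Cset (ℓ^k) r) : ℝ)) = (S : ℝ) - (Nc : ℝ) := by
    have := congrArg (fun x : ℕ => (x : ℝ)) hC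
    push_cast at this
    linarith
  have hGval : ((Nat.card (GL (Fin 2) (ZMod (ℓ^k))) : ℝ)) = ((ℓ^k).totient : ℝ) * (S : ℝ) := by
    rw [hG]; push_cast; ring
  have hkr : (ℓ : ℝ) * (Nc : ℝ) ≤ (S : ℝ) + (Nc : ℝ) := by exact_mod_cast hkeyN
  have hSr : (0:ℝ) < (S : ℝ) := by exact_mod_cast hSpos
  have hfr : (0:ℝ) < ((ℓ^k).totient : ℝ) := by exact_mod_cast hφpos
  have hlr : (2:ℝ) ≤ (ℓ : ℝ) := by exact_mod_cast hl2
  have hNcr : (0:ℝ) ≤ (Nc : ℝ) := Nat.cast_nonneg _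
  constructor
  · rw [hCval, hGval, div_mul_div_comm, div_le_div_iff₀ (by nlinarith) (by positivity)]
    nlinarith [mul_le_mul_of_nonneg_left
      (show ((ℓ:ℝ) - 1) * (Nc : ℝ) ≤ (S : ℝ) by nlinarith) hfr.le]
  · rw [hCval, hGval, div_le_div_iff₀ (by positivity) hfr]
    nlinarith [mul_nonneg hfr.le hNcr]
end
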